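/- arXiv:2410.21915 — 7 statements merged into one kernel-verified Lean document; each statement's English description precedes it below -/
import Mathlib

section
/- Under the standing setup, fix t ∈ ℕ and for n ∈ ℕ, g ∈ G set I_{t,n}(g) = {γ ∈ Γ_t : D_t + γ ⊆ D_n + g} and R_{t,n}(g) = (D_n + g) \ ⋃_{γ ∈ I_{t,n}(g)}(D_t + γ). Then #R_{t,n}(g)/#D_n → 0 and #I_{t,n}(g)/#D_n → 1/#D_t as n → ∞, and both convergences are uniform in g ∈ G. -/
namespace ToeplitzPaper

open Filter Topology Set

variable {G : Type*} [AddCommGroup G]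

/-- The shift action of `G` on arrays `G → A`: `(shiftArr g x) h = x (h + g)`. -/
def shiftArr {A : Type*} (g : G) (x : G → A) : G → A := fun h => x (h + g)

/-- The orbit of an array under the shift action. -/
def shiftOrbit {A : Type*} (x : G → A) : Set (G → A) := Set.range fun g : G => shiftArr g x

/-- The orbit closure of an array: the subshift generated by it
(`A` carries the discrete topology, `G → A` the product topology). -/
def orbitClosure {A : Type*} [TopologicalSpace A] (x : G → A) : Set (G → A) :=
  closure (shiftOrbit x)

/-- A subshift is minimal if every orbit is dense in it. -/
def IsMinimalSubshift {A : Type*} [TopologicalSpace A] (X : Set (G → A)) : Prop :=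
  X.Nonempty ∧ ∀ y ∈ X, X ⊆ closure (shiftOrbit y)

/-- `μ` is a shift-invariant probability measure giving full mass to `X`. -/
def InvariantProbOn {A : Type*} [MeasurableSpace A] (X : Set (G → A))
    (μ : MeasureTheory.Measure (G → A)) : Prop :=
  MeasureTheory.IsProbabilityMeasure μ ∧ μ X = 1 ∧
  ∀ g : G, MeasureTheory.Measure.map (shiftArr g) μ = μ

/-- A subshift is uniquely ergodic if it carries exactly one invariant probability measure. -/
def UniquelyErgodicSubshift {A : Type*} [MeasurableSpace A] (X : Set (G → A)) : Prop :=
  ∃! μ : MeasureTheory.Measure (G → A), InvariantProbOn X μ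

/-- Strictly ergodic = minimal and uniquely ergodic. -/
def StrictlyErgodicSubshift {A : Type*} [TopologicalSpace A] [MeasurableSpace A]
    (X : Set (G → A)) : Prop :=
  IsMinimalSubshift X ∧ UniquelyErgodicSubshift X

/-- A Toeplitz array: every position is periodic with respect to some
finite-index subgroup. -/
def IsToeplitz {A : Type*} (x : G → A) : Prop :=
  ∀ g : G, ∃ Γ : AddSubgroup G, Γ.FiniteIndex ∧ ∀ γ ∈ Γ, x (g + γ) = x g

/-- A Følner sequence of (nonempty finite) subsets of `G`. -/
def IsFolnerSeq (D : ℕ → Set G) : Prop :=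
  (∀ n, (D n).Finite) ∧ (∀ n, (D n).Nonempty) ∧
  ∀ g : G,
    Tendsto (fun n => ((symmDiff ((g + ·) '' D n) (D n)).ncard : ℝ) / ((D n).ncard : ℝ))
      atTop (𝓝 0)

/-- The number of `M`-blocks occurring in `X`. -/
noncomputable def blockCount {A : Type*} (X : Set (G → A)) (M : Set G) : ℕ :=
  Set.ncard {B : M → A | ∃ y ∈ X, ∀ m : M, y ↑m = B m}

/-- `X` has topological entropy `h`: along every Følner sequence the
exponential growth rate of the number of blocks converges to `h`. -/
def HasTopEntropy {A : Type*} (X : Set (G → A)) (h : ℝ) : Prop :=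
  ∀ F : ℕ → Set G, IsFolnerSeq F →
    Tendsto (fun n => Real.log (blockCount X (F n)) / ((F n).ncard : ℝ)) atTop (𝓝 h)

/-- `D` is a fundamental domain for `G/Γ`: every element of `G` has a unique
representative in `D` modulo `Γ`. -/
def IsFundDomain (Γ : AddSubgroup G) (D : Set G) : Prop :=
  ∀ g : G, ∃! d, d ∈ D ∧ g - d ∈ Γ

/-- The standing setup: a decreasing sequence of finite-index subgroups with
trivial intersection together with an adapted Følner sequence of fundamental
domains. -/
def StandingSetup (Γ : ℕ → AddSubgroup G) (D : ℕ → Set G) : Prop :=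
  (∀ n, Γ (n + 1) ≤ Γ n) ∧ (∀ n, (Γ n).FiniteIndex) ∧
  ((⋂ n, (Γ n : Set G)) = {0}) ∧
  (∀ n, (D n).Finite) ∧ ((⋃ n, D n) = Set.univ) ∧ (∀ n, (0 : G) ∈ D n) ∧
  (∀ n, D n ⊆ D (n + 1)) ∧ (∀ n, IsFundDomain (Γ n) (D n)) ∧
  (∀ m n, n < m → D m = ⋃ γ ∈ D m ∩ (Γ n : Set G), (γ + ·) '' D n) ∧
  IsFolnerSeq D

/-- The set `W_{D_t}(x)` of `D_t`-symbols of `x`. -/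
def DSymbols {A : Type*} (x : G → A) (Γt : AddSubgroup G) (Dt : Set G) : Set (Dt → A) :=
  {B | ∃ γ ∈ Γt, ∀ d : Dt, B d = x (↑d + γ)}

/-- The frequency `ap(B,C)` of the `D_t`-symbol `B` appearing in the
`D_s`-symbol `C` along points of `Γ_t`. -/
noncomputable def apFreq {A : Type*} (Γt : AddSubgroup G) (Dt Ds : Set G)
    (B : Dt → A) (C : Ds → A) : ℝ :=
  (({γ : G | γ ∈ Ds ∧ γ ∈ Γt ∧
      ∀ d : Dt, ∀ hm : (↑d + γ : G) ∈ Ds, C ⟨↑d + γ, hm⟩ = B d}).ncard : ℝ) /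
    (({γ : G | γ ∈ Ds ∧ γ ∈ Γt}).ncard : ℝ)

/-- For every `t` and every `D_t`-symbol `B` of `x`, the frequencies `ap(B,C)`
converge, uniformly in the `D_s`-symbol `C`, to some number `ν(B)` as `s → ∞`. -/
def ApUniformLimit {A : Type*} (x : G → A) (Γ : ℕ → AddSubgroup G) (D : ℕ → Set G) : Prop :=
  ∀ t : ℕ, ∀ B ∈ DSymbols x (Γ t) (D t), ∃ ν : ℝ,
    ∀ ε : ℝ, 0 < ε → ∃ s₀ : ℕ, ∀ s : ℕ, s₀ ≤ s → t ≤ s →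
      ∀ C ∈ DSymbols x (Γ s) (D s), |apFreq (Γ t) (D t) (D s) B C - ν| < ε

/-- `I_{t,n}(g) = {γ ∈ Γ_t : D_t + γ ⊆ D_n + g}`. -/
def Iset (Γt : AddSubgroup G) (Dt Dn : Set G) (g : G) : Set G :=
  {γ | γ ∈ Γt ∧ (γ + ·) '' Dt ⊆ (g + ·) '' Dn}

/-- `R_{t,n}(g) = (D_n + g) \ ⋃_{γ ∈ I_{t,n}(g)} (D_t + γ)`. -/
def Rset (Γt : AddSubgroup G) (Dt Dn : Set G) (g : G) : Set G :=
  ((g + ·) '' Dn) \ ⋃ γ ∈ Iset Γt Dt Dn g, (γ + ·) '' Dt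

section Statement8Aux

/-- Each point of `G` lies in a unique `Γt`-translate of the fundamental domain `Dt`. -/
lemma existsUnique_tile {Γt : AddSubgroup G} {Dt : Set G}
    (hfd : IsFundDomain Γt Dt) (x : G) :
    ∃! γ : G, γ ∈ Γt ∧ x ∈ (γ + ·) '' Dt := by
  obtain ⟨d, ⟨hd, hdΓ⟩, huniq⟩ := hfd x
  refine ⟨x - d, ⟨hdΓ, ⟨d, hd, sub_add_cancel x d⟩⟩, ?_⟩
  rintro γ ⟨hγ, d', hd', rfl⟩
  have hdd : d' = d := huniq d' ⟨hd', by simpa using hγ⟩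
  simp [hdd]

lemma iset_subset {Γt : AddSubgroup G} {Dt Dn : Set G} (h0 : (0 : G) ∈ Dt) (g : G) :
    Iset Γt Dt Dn g ⊆ (g + ·) '' Dn :=
  fun γ hγ => hγ.2 ⟨0, h0, add_zero γ⟩

lemma card_equation {Γt : AddSubgroup G} {Dt Dn : Set G}
    (hfd : IsFundDomain Γt Dt) (h0 : (0 : G) ∈ Dt)
    (hDt : Dt.Finite) (hDn : Dn.Finite) (g : G) :
    Dn.ncard = (Rset Γt Dt Dn g).ncard + (Iset Γt Dt Dn g).ncard * Dt.ncard := by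
  set Fn : Set G := (g + ·) '' Dn with hFn
  have hFnfin : Fn.Finite := hDn.image _
  set I := Iset Γt Dt Dn g with hI
  have hIfin : I.Finite := hFnfin.subset (iset_subset h0 g)
  set T : Set G := ⋃ γ ∈ I, (γ + ·) '' Dt with hT
  have hTsub : T ⊆ Fn := by
    simp only [hT, Set.iUnion_subset_iff]
    exact fun γ hγ => hγ.2
  have hTim : T = (fun p : G × G => p.1 + p.2) '' (I ×ˢ Dt) := by
    ext x
    simp only [hT, Set.mem_iUnion, Set.mem_image, Set.mem_prod, Prod.exists]
    constructor
    · rintro ⟨γ, hγ, d, hd, rfl⟩; exact ⟨γ, d, ⟨hγ, hd⟩, rfl⟩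
    · rintro ⟨γ, d, ⟨hγ, hd⟩, rfl⟩; exact ⟨γ, hγ, d, hd, rfl⟩
  have hinj : Set.InjOn (fun p : G × G => p.1 + p.2) (I ×ˢ Dt) := by
    rintro ⟨γ, d⟩ ⟨hγ, hd⟩ ⟨γ', d'⟩ ⟨hγ', hd'⟩ (h : γ + d = γ' + d')
    obtain ⟨c, -, hu⟩ := existsUnique_tile hfd (γ + d)
    have h1 : γ = c := hu γ ⟨hγ.1, d, hd, rfl⟩
    have h2 : γ' = c := hu γ' ⟨hγ'.1, d', hd', h.symm⟩
    have hγγ : γ = γ' := h1.trans h2.symm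
    have hdd : d = d' := by subst hγγ; exact add_left_cancel h
    simp [hγγ, hdd]
  have hTcard : T.ncard = I.ncard * Dt.ncard := by
    rw [hTim, Set.ncard_image_of_injOn hinj]
    have hps : (I ×ˢ Dt : Set (G × G)) = ↑(hIfin.toFinset ×ˢ hDt.toFinset) := by
      rw [Finset.coe_product, Set.Finite.coe_toFinset, Set.Finite.coe_toFinset]
    rw [hps, Set.ncard_coe_finset, Finset.card_product,
      Set.ncard_eq_toFinset_card _ hIfin, Set.ncard_eq_toFinset_card _ hDt]
  have hR : Rset Γt Dt Dn g = Fn \ T := rfl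
  have hDnc : Dn.ncard = Fn.ncard :=
    (Set.ncard_image_of_injective Dn (add_right_injective g)).symm
  rw [hDnc, ← Set.ncard_diff_add_ncard_of_subset hTsub hFnfin, hR, hTcard]

lemma rset_bound {Γt : AddSubgroup G} {Dt Dn : Set G}
    (hfd : IsFundDomain Γt Dt) (hDt : Dt.Finite) (hDn : Dn.Finite) (g : G) :
    (Rset Γt Dt Dn g).ncard ≤
      ∑ p ∈ hDt.toFinset ×ˢ hDt.toFinset,
        (symmDiff (((p.1 - p.2) + ·) '' Dn) Dn).ncard := by
  classical
  have hsd : ∀ c : G, (symmDiff ((c + ·) '' Dn) Dn).Finite := by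
    intro c
    rw [Set.symmDiff_def]
    exact ((hDn.image _).diff).union (hDn.diff)
  set P : Finset (G × G) := hDt.toFinset ×ˢ hDt.toFinset with hP
  set F : G × G → Finset G := fun p => (hsd (p.1 - p.2)).toFinset with hF
  have hsubset : (fun x => x - g) '' Rset Γt Dt Dn g ⊆ ↑(P.biUnion F) := by
    rintro _ ⟨x, ⟨hx1, hx2⟩, rfl⟩
    obtain ⟨γ, ⟨hγΓ, d, hd, hx⟩, -⟩ := existsUnique_tile hfd x
    have hγI : γ ∉ Iset Γt Dt Dn g := by
      intro hγI
      exact hx2 (Set.mem_biUnion hγI ⟨d, hd, hx⟩)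
    have hnsub : ¬ ((γ + ·) '' Dt ⊆ (g + ·) '' Dn) := fun h => hγI ⟨hγΓ, h⟩
    obtain ⟨y, ⟨d', hd', hy⟩, hyout⟩ := Set.not_subset.mp hnsub
    have hxg : x - g ∈ Dn := by
      obtain ⟨z, hz, hzx⟩ := hx1
      simpa [← hzx] using hz
    have hxout : x - g ∉ ((d - d') + ·) '' Dn := by
      rintro ⟨z, hz, hzx⟩
      apply hyout
      refine ⟨z, hz, ?_⟩
      have hxeq : γ + d = x := hx
      have h5 : d - d' + z + g = γ + d := by
        rw [eq_sub_iff_add_eq] at hzx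
        exact hzx.trans hxeq.symm
      have h6 := congrArg (fun w => w + (d' - d)) h5
      have h7 : g + z = γ + d' := by
        abel_nf at h6 ⊢
        exact h6
      rw [show (fun x => g + x) z = g + z from rfl, h7]
      exact hy
    have hmem : x - g ∈ symmDiff (((d - d') + ·) '' Dn) Dn :=
      Set.mem_symmDiff.mpr (Or.inr ⟨hxg, hxout⟩)
    refine Finset.mem_coe.mpr (Finset.mem_biUnion.mpr ⟨(d, d'), ?_, ?_⟩)
    · simp [hP, hDt.mem_toFinset, hd, hd']
    · simpa [hF, (hsd (d - d')).mem_toFinset] using hmem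
  calc (Rset Γt Dt Dn g).ncard
      = ((fun x => x - g) '' Rset Γt Dt Dn g).ncard :=
        (Set.ncard_image_of_injective _ (sub_left_injective)).symm
    _ ≤ ((P.biUnion F : Finset G) : Set G).ncard :=
        Set.ncard_le_ncard hsubset (P.biUnion F).finite_toSet
    _ = (P.biUnion F).card := Set.ncard_coe_finset _
    _ ≤ ∑ p ∈ P, (F p).card := Finset.card_biUnion_le
    _ = ∑ p ∈ P, (symmDiff (((p.1 - p.2) + ·) '' Dn) Dn).ncard := by
        refine Finset.sum_congr rfl fun p _ => ?_
        rw [hF, ← Set.ncard_eq_toFinset_card _ (hsd (p.1 - p.2))]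

end Statement8Aux

/-- **Lemma.** Under the standing setup, `#R_{t,n}(g)/#D_n → 0` and
`#I_{t,n}(g)/#D_n → 1/#D_t` as `n → ∞`, uniformly in `g ∈ G`. -/
theorem statement8 {G : Type*} [AddCommGroup G] [Countable G]
    (Γ : ℕ → AddSubgroup G) (D : ℕ → Set G) (hsetup : StandingSetup Γ D)
    (t : ℕ) :
    (∀ ε : ℝ, 0 < ε → ∃ N : ℕ, ∀ n : ℕ, N ≤ n → ∀ g : G,
      |((Rset (Γ t) (D t) (D n) g).ncard : ℝ) / ((D n).ncard : ℝ)| < ε) ∧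
    (∀ ε : ℝ, 0 < ε → ∃ N : ℕ, ∀ n : ℕ, N ≤ n → ∀ g : G,
      |((Iset (Γ t) (D t) (D n) g).ncard : ℝ) / ((D n).ncard : ℝ)
        - 1 / ((D t).ncard : ℝ)| < ε) := by
  obtain ⟨-, -, -, hDfin, -, hD0, -, hfd, -, hfinF, hneF, htend⟩ := hsetup
  set P : Finset (G × G) := (hDfin t).toFinset ×ˢ (hDfin t).toFinset with hP
  set S : ℕ → ℝ := fun n =>
    ∑ p ∈ P, ((symmDiff (((p.1 - p.2) + ·) '' (D n)) (D n)).ncard : ℝ) / ((D n).ncard : ℝ)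
    with hS
  have hStend : Tendsto S atTop (𝓝 0) := by
    have h0 := tendsto_finset_sum P (fun p (_ : p ∈ P) => htend (p.1 - p.2))
    rw [Finset.sum_const, smul_zero] at h0
    exact h0
  have hdnpos : ∀ n : ℕ, (0 : ℝ) < ((D n).ncard : ℝ) := by
    intro n
    exact_mod_cast (Set.ncard_pos (hDfin n)).mpr (hneF n)
  have hdt1 : (1 : ℝ) ≤ ((D t).ncard : ℝ) := by
    exact_mod_cast (Set.ncard_pos (hDfin t)).mpr ⟨0, hD0 t⟩
  have hRle : ∀ (n : ℕ) (g : G),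
      ((Rset (Γ t) (D t) (D n) g).ncard : ℝ) / ((D n).ncard : ℝ) ≤ S n := by
    intro n g
    have hb := rset_bound (hfd t) (hDfin t) (hDfin n) g
    have hb' : ((Rset (Γ t) (D t) (D n) g).ncard : ℝ) ≤
        ∑ p ∈ P, ((symmDiff (((p.1 - p.2) + ·) '' (D n)) (D n)).ncard : ℝ) := by
      exact_mod_cast hb
    have : S n = (∑ p ∈ P,
        ((symmDiff (((p.1 - p.2) + ·) '' (D n)) (D n)).ncard : ℝ)) / ((D n).ncard : ℝ) := by
      rw [hS, Finset.sum_div]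
    rw [this]
    gcongr
  have hRnonneg : ∀ (n : ℕ) (g : G),
      (0 : ℝ) ≤ ((Rset (Γ t) (D t) (D n) g).ncard : ℝ) / ((D n).ncard : ℝ) := by
    intro n g
    positivity
  have hmain : ∀ ε : ℝ, 0 < ε → ∃ N : ℕ, ∀ n : ℕ, N ≤ n → ∀ g : G,
      ((Rset (Γ t) (D t) (D n) g).ncard : ℝ) / ((D n).ncard : ℝ) < ε := by
    intro ε hε
    obtain ⟨N, hN⟩ := Metric.tendsto_atTop.mp hStend ε hε
    refine ⟨N, fun n hn g => ?_⟩
    have hSn : S n < ε := by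
      have := hN n hn
      rw [Real.dist_eq, sub_zero] at this
      exact lt_of_le_of_lt (le_abs_self _) this
    exact lt_of_le_of_lt (hRle n g) hSn
  constructor
  · intro ε hε
    obtain ⟨N, hN⟩ := hmain ε hε
    refine ⟨N, fun n hn g => ?_⟩
    rw [abs_of_nonneg (hRnonneg n g)]
    exact hN n hn g
  · intro ε hε
    obtain ⟨N, hN⟩ := hmain ε hε
    refine ⟨N, fun n hn g => ?_⟩
    have hcard := card_equation (hfd t) (hD0 t) (hDfin t) (hDfin n) g
    set a : ℝ := ((Rset (Γ t) (D t) (D n) g).ncard : ℝ) with ha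
    set b : ℝ := ((Iset (Γ t) (D t) (D n) g).ncard : ℝ) with hb
    set dn : ℝ := ((D n).ncard : ℝ) with hdn
    set dt : ℝ := ((D t).ncard : ℝ) with hdt
    have hcard' : dn = a + b * dt := by
      rw [ha, hb, hdn, hdt]; exact_mod_cast hcard
    have hdnp : (0 : ℝ) < dn := hdnpos n
    have hdtp : (0 : ℝ) < dt := lt_of_lt_of_le one_pos hdt1
    have hanon : (0 : ℝ) ≤ a := by rw [ha]; positivity
    have hkey : b / dn - 1 / dt = -(a / (dn * dt)) := by
      field_simp
      linarith [hcard']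
    rw [hkey, abs_neg, abs_of_nonneg (by positivity)]
    have h1 : a / (dn * dt) ≤ a / dn := by
      gcongr
      exact le_mul_of_one_le_right hdnp.le hdt1
    exact lt_of_le_of_lt h1 (hN n hn g)

end ToeplitzPaper
end

section
/- Let G = ℤ^d, let x ∈ Σ^G be a Toeplitz array with period structure (Γ_n)_{n∈ℕ}, Γ_n = P_n ℤ^d for a scale (P_n), and let (D_n) be fundamental domains as in the standing setup. Fix t ∈ ℕ. Then the map Φ_t: cl O_G(x) → (G/Γ_t) × cl O_G(x^{(t)}), y ↦ (π_t(y)+Γ_t, y^{(t)}), is a homeomorphism, and it is a topological conjugacy between the Toeplitz subshift (cl O_G(x), G) and the skew product system on (G/Γ_t) × cl O_G(x^{(t)}) with action (g, (h+Γ_t, y)) ↦ (g+h+Γ_t, δ_t(g, h+Γ_t, y)). -/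
namespace ToeplitzPaper

open Filter Topology Set

variable {G : Type*} [AddCommGroup G]

/-- `Per(x,Γ,α)`: positions on which `x` is `Γ`-periodically equal to `α`. -/
def PerSet {A : Type*} (x : G → A) (Γ : AddSubgroup G) (α : A) : Set G :=
  {g | ∀ γ ∈ Γ, x (g + γ) = α}

/-- `Per(x,Γ)`: the `Γ`-periodic positions of `x`. -/
def PerAll {A : Type*} (x : G → A) (Γ : AddSubgroup G) : Set G :=
  {g | ∀ γ ∈ Γ, x (g + γ) = x g}

/-- `Γ` is an essential period of `x`. -/
def IsEssentialPeriod {A : Type*} (x : G → A) (Γ : AddSubgroup G) : Prop :=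
  (PerAll x Γ).Nonempty ∧
  ∀ h : G, (∀ α : A, ∀ g ∈ PerSet x Γ α, g + h ∈ PerSet x Γ α) → h ∈ Γ

/-- A period structure of `x`. -/
def IsPeriodStructure {A : Type*} (x : G → A) (Γ : ℕ → AddSubgroup G) : Prop :=
  (∀ n, Γ (n + 1) ≤ Γ n) ∧ (∀ n, (Γ n).FiniteIndex) ∧
  (⋃ n, PerAll x (Γ n)) = Set.univ ∧ ∀ n, IsEssentialPeriod x (Γ n)

/-- The subgroup `P·ℤ^d ≤ ℤ^d` associated to an integer matrix `P`. -/
def matSub {d : ℕ} (P : Matrix (Fin d) (Fin d) ℤ) : AddSubgroup (Fin d → ℤ) :=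
  P.mulVecLin.toAddMonoidHom.range

/-- A scale: a sequence of `d×d` integer matrices with nonzero determinant
such that each `P_{n+1}` is `P_n` times an integer matrix. -/
def IsScale {d : ℕ} (P : ℕ → Matrix (Fin d) (Fin d) ℤ) : Prop :=
  (∀ n, (P n).det ≠ 0) ∧ ∀ n, ∃ Q : Matrix (Fin d) (Fin d) ℤ, P (n + 1) = P n * Q

/-- The box `P([0,1)^d) ∩ ℤ^d = {g : 0 ≤ g_i < P_{i,i}}` of a diagonal
matrix `P`. -/
def boxSet {d : ℕ} (P : Matrix (Fin d) (Fin d) ℤ) : Set (Fin d → ℤ) :=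
  {g | ∀ i, 0 ≤ g i ∧ g i < P i i}

/-- The array `y^{(t)} ∈ (W_{D_t})^{ℤ^d}`: `y^{(t)}(g) = W_t(y, P_t g)`, where
`W_t(y,γ)(d) = y(d + γ − π_t(y))`. -/
def ytArr {d : ℕ} {A : Type*} (P : Matrix (Fin d) (Fin d) ℤ)
    (Dt : Set (Fin d → ℤ)) (πt : ((Fin d → ℤ) → A) → (Fin d → ℤ))
    (y : (Fin d → ℤ) → A) : (Fin d → ℤ) → (Dt → A) :=
  fun g dd => y (↑dd + P.mulVec g - πt y)

/-- **Lemma (i)-(iii).** Let `x` be a Toeplitz array over `ℤ^d` with period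
structure `Γ_n = P_n ℤ^d` for a scale `(P_n)`, and `(D_n)` fundamental
domains as in the standing setup. Then `Φ_t : y ↦ (π_t(y) + Γ_t, y^{(t)})` is
a homeomorphism from the Toeplitz subshift onto
`(ℤ^d/Γ_t) × cl O(x^{(t)})`, and it conjugates the shift to the skew product
action `(g, (h + Γ_t, z)) ↦ (g + h + Γ_t, δ_t(g, h + Γ_t, z))`, where
`δ_t(g, h + Γ_t, z)(g') = z(g' + ε_t(g,h))`. -/
theorem statement9 (d : ℕ) {A : Type*}
    [Fintype A] [TopologicalSpace A] [DiscreteTopology A]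
    (P : ℕ → Matrix (Fin d) (Fin d) ℤ) (hP : IsScale P)
    (D : ℕ → Set (Fin d → ℤ))
    (hsetup : StandingSetup (fun n => matSub (P n)) D)
    (x : (Fin d → ℤ) → A) (hx : IsToeplitz x)
    (hps : IsPeriodStructure x (fun n => matSub (P n)))
    (t : ℕ)
    (πt : ((Fin d → ℤ) → A) → (Fin d → ℤ))
    (hπt : ∀ y ∈ orbitClosure x, πt y ∈ D t ∧
      ∀ α : A, PerSet y (matSub (P t)) α =
        (fun g => g - πt y) '' PerSet x (matSub (P t)) α)
    (ψ : (Fin d → ℤ) → (Fin d → ℤ))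
    (hψ : ∀ g, ψ g ∈ D t ∧ g - ψ g ∈ matSub (P t))
    (eps : (Fin d → ℤ) → (Fin d → ℤ) → (Fin d → ℤ))
    (heps : ∀ g h' : Fin d → ℤ, (P t).mulVec (eps g h') = -ψ (g + h') + g + ψ h') :
    -- `y ∈ cl O(x)` implies `y^{(t)} ∈ cl O(x^{(t)})`
    (∀ y ∈ orbitClosure x,
      ytArr (P t) (D t) πt y ∈ orbitClosure (ytArr (P t) (D t) πt x)) ∧
    -- `Φ_t` is a homeomorphism
    (∃ e : ↥(orbitClosure x) ≃ₜ
        (((Fin d → ℤ) ⧸ matSub (P t)) × ↥(orbitClosure (ytArr (P t) (D t) πt x))),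
      ∀ y : ↥(orbitClosure x),
        (e y).1 = QuotientAddGroup.mk (πt ↑y) ∧
        ((e y).2 : (Fin d → ℤ) → (↥(D t) → A)) =
          ytArr (P t) (D t) πt ↑y) ∧
    -- `Φ_t` conjugates the shift to the skew product action
    (∀ y ∈ orbitClosure x, ∀ g : Fin d → ℤ,
      (QuotientAddGroup.mk (πt (shiftArr g y)) : (Fin d → ℤ) ⧸ matSub (P t)) =
        QuotientAddGroup.mk (g + πt y) ∧
      ytArr (P t) (D t) πt (shiftArr g y) =
        fun g' => ytArr (P t) (D t) πt y (g' + eps g (πt y))) := by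
  classical
  obtain ⟨hdec, hfi, hint, hDfin, hDunion, hD0, hDmono, hDfund, hDtile, hFolner⟩ := hsetup
  set Γ : AddSubgroup (Fin d → ℤ) := matSub (P t) with hΓdef
  have hfund := hDfund t
  have h0D : (0 : Fin d → ℤ) ∈ D t := hD0 t
  have fundUniq : ∀ a b : Fin d → ℤ, a ∈ D t → b ∈ D t → a - b ∈ Γ → a = b := by
    intro a b ha hb hab
    obtain ⟨d₀, hd₀, huniq⟩ := hfund b
    have h1 : a = d₀ := huniq a ⟨ha, by simpa using neg_mem hab⟩
    have h2 : b = d₀ := huniq b ⟨hb, by simpa using zero_mem Γ⟩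
    rw [h1, h2]
  have hess : IsEssentialPeriod x Γ := hps.2.2.2 t
  have hxcl : x ∈ orbitClosure x := subset_closure ⟨0, by funext h; simp [shiftArr]⟩
  have shiftMem : ∀ y ∈ orbitClosure x, ∀ g : Fin d → ℤ, shiftArr g y ∈ orbitClosure x := by
    intro y hy g
    have hc : Continuous (shiftArr g : ((Fin d → ℤ) → A) → ((Fin d → ℤ) → A)) :=
      continuous_pi fun h => continuous_apply (h + g)
    refine map_mem_closure hc hy ?_
    rintro z ⟨k, rfl⟩
    exact ⟨g + k, by funext h; simp [shiftArr, add_assoc]⟩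
  have perShift : ∀ (y : (Fin d → ℤ) → A) (g : Fin d → ℤ) (α : A) (k : Fin d → ℤ),
      k ∈ PerSet (shiftArr g y) Γ α ↔ k + g ∈ PerSet y Γ α := by
    intro y g α k
    constructor
    · intro h γ hγ
      have h2 : y (k + γ + g) = α := h γ hγ
      rwa [show k + γ + g = k + g + γ by abel] at h2
    · intro h γ hγ
      show y (k + γ + g) = α
      rw [show k + γ + g = k + g + γ by abel]
      exact h γ hγ
  have congrPi : ∀ y ∈ orbitClosure x, ∀ g : Fin d → ℤ,
      πt (shiftArr g y) - (g + πt y) ∈ Γ := by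
    intro y hy g
    apply hess.2
    intro α k hk
    have h1 : k - πt y ∈ PerSet y Γ α := by
      rw [(hπt y hy).2 α]; exact ⟨k, hk, rfl⟩
    have h2 : k - πt y - g + g ∈ PerSet y Γ α := by simpa using h1
    have h3 : k - πt y - g ∈ PerSet (shiftArr g y) Γ α := (perShift y g α _).mpr h2
    rw [(hπt (shiftArr g y) (shiftMem y hy g)).2 α] at h3
    obtain ⟨k', hk', hEq⟩ := h3
    simp only at hEq
    have hk'' : k' = k + (πt (shiftArr g y) - (g + πt y)) := by
      have h4 := sub_eq_iff_eq_add.mp hEq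
      rw [h4]; abel
    rwa [hk''] at hk'
  have piX0 : πt x = 0 := by
    have hneg : -πt x ∈ Γ := by
      apply hess.2
      intro α k hk
      have h1 : k - πt x ∈ PerSet x Γ α := by
        rw [(hπt x hxcl).2 α]; exact ⟨k, hk, rfl⟩
      simpa [sub_eq_add_neg] using h1
    have hmem : πt x ∈ Γ := by simpa using neg_mem hneg
    exact fundUniq (πt x) 0 (hπt x hxcl).1 h0D (by simpa using hmem)
  have psiEq : ∀ a : Fin d → ℤ, a ∈ D t → ψ a = a := by
    intro a ha
    exact fundUniq (ψ a) a (hψ a).1 ha (by simpa using neg_mem (hψ a).2)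
  have psi0 : ψ 0 = 0 := psiEq 0 h0D
  have piShift : ∀ y ∈ orbitClosure x, ∀ g : Fin d → ℤ,
      πt (shiftArr g y) = ψ (g + πt y) := by
    intro y hy g
    apply fundUniq _ _ (hπt _ (shiftMem y hy g)).1 (hψ (g + πt y)).1
    have h1 := congrPi y hy g
    have h2 := (hψ (g + πt y)).2
    have h3 : πt (shiftArr g y) - ψ (g + πt y) =
        (πt (shiftArr g y) - (g + πt y)) + ((g + πt y) - ψ (g + πt y)) := by abel
    rw [h3]; exact add_mem h1 h2
  have part3 : ∀ y ∈ orbitClosure x, ∀ g : Fin d → ℤ,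
      (QuotientAddGroup.mk (πt (shiftArr g y)) : (Fin d → ℤ) ⧸ matSub (P t)) =
        QuotientAddGroup.mk (g + πt y) ∧
      ytArr (P t) (D t) πt (shiftArr g y) =
        fun g' => ytArr (P t) (D t) πt y (g' + eps g (πt y)) := by
    intro y hy g
    constructor
    · rw [QuotientAddGroup.eq]
      have h1 := congrPi y hy g
      have h2 : -(πt (shiftArr g y)) + (g + πt y) = -(πt (shiftArr g y) - (g + πt y)) := by abel
      rw [h2]; exact neg_mem h1
    · funext g' dd
      show y (↑dd + (P t).mulVec g' - πt (shiftArr g y) + g) =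
        y (↑dd + (P t).mulVec (g' + eps g (πt y)) - πt y)
      rw [piShift y hy g, Matrix.mulVec_add, heps, psiEq (πt y) (hπt y hy).1]
      congr 1
      abel
  set Θ : ((Fin d → ℤ) → A) → (Fin d → ℤ) → (↥(D t) → A) := ytArr (P t) (D t) πt with hΘdef
  have ytOrbit : ∀ g : Fin d → ℤ, Θ (shiftArr g x) = shiftArr (eps g 0) (Θ x) := by
    intro g
    have h := (part3 x hxcl g).2
    rw [piX0] at h
    exact h
  have locConst : ∀ y ∈ orbitClosure x, ∃ E : Finset (Fin d → ℤ),
      ∀ z ∈ orbitClosure x, (∀ p ∈ E, z p = y p) → πt z = πt y := by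
    intro y hy
    have key : ∀ d' : Fin d → ℤ, ∃ p : Fin d → ℤ,
        (d' ∈ D t ∧ d' ≠ πt y) → ∀ z ∈ orbitClosure x, z p = y p → πt z ≠ d' := by
      intro d'
      by_contra hcon
      push_neg at hcon
      obtain ⟨⟨hd'D, hd'ne⟩, -⟩ := hcon 0
      have hsub : ∀ α : A, ∀ k, k ∈ PerSet x Γ α → k + (πt y - d') ∈ PerSet x Γ α := by
        intro α k hk
        have hky : k - d' ∈ PerSet y Γ α := by
          intro γ hγ
          obtain ⟨-, z, hz, hzy, hzd⟩ := hcon (k - d' + γ)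
          have hkz : k - d' ∈ PerSet z Γ α := by
            rw [(hπt z hz).2 α, hzd]; exact ⟨k, hk, rfl⟩
          have h5 := hkz γ hγ
          rwa [hzy] at h5
        rw [(hπt y hy).2 α] at hky
        obtain ⟨k', hk', hEq⟩ := hky
        simp only at hEq
        have hk'' : k' = k + (πt y - d') := by
          have h4 := sub_eq_iff_eq_add.mp hEq
          rw [h4]; abel
        rwa [hk''] at hk'
      have hΓ' : πt y - d' ∈ Γ := hess.2 _ hsub
      exact hd'ne (fundUniq d' (πt y) hd'D (hπt y hy).1
        (by simpa [neg_sub] using neg_mem hΓ'))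
    choose pfn hpfn using key
    refine ⟨((hDfin t).image pfn).toFinset, ?_⟩
    intro z hz hagree
    by_contra hne
    exact hpfn (πt z) ⟨(hπt z hz).1, hne⟩ z hz
      (hagree _ (by rw [Set.Finite.mem_toFinset]; exact ⟨πt z, (hπt z hz).1, rfl⟩)) rfl
  have openAgree : ∀ (E : Finset (Fin d → ℤ)) (y : (Fin d → ℤ) → A),
      IsOpen {z : (Fin d → ℤ) → A | ∀ p ∈ E, z p = y p} := by
    intro E y
    have hset : {z : (Fin d → ℤ) → A | ∀ p ∈ E, z p = y p} =
        ⋂ p ∈ E, (fun z : (Fin d → ℤ) → A => z p) ⁻¹' {y p} := by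
      ext z; simp
    rw [hset]
    exact isOpen_biInter_finset fun p _ =>
      (isOpen_discrete _).preimage (continuous_apply p)
  have contTheta : ContinuousOn Θ (orbitClosure x) := by
    intro y hy
    obtain ⟨E, hE⟩ := locConst y hy
    have hU : {z : (Fin d → ℤ) → A | ∀ p ∈ E, z p = y p} ∈ 𝓝 y :=
      (openAgree E y).mem_nhds (fun p _ => rfl)
    have hΞ : Continuous (fun z : (Fin d → ℤ) → A =>
        (fun g dd => z (↑dd + (P t).mulVec g - πt y) : (Fin d → ℤ) → (↥(D t) → A))) :=
      continuous_pi fun g => continuous_pi fun dd => continuous_apply _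
    have hev : Θ =ᶠ[𝓝[orbitClosure x] y]
        (fun z => fun g dd => z (↑dd + (P t).mulVec g - πt y)) := by
      filter_upwards [mem_nhdsWithin_of_mem_nhds hU, self_mem_nhdsWithin] with z hzU hzX
      have hπz : πt z = πt y := hE z hzX hzU
      funext g dd
      show z (↑dd + (P t).mulVec g - πt z) = z (↑dd + (P t).mulVec g - πt y)
      rw [hπz]
    exact (hΞ.continuousWithinAt).congr_of_eventuallyEq hev rfl
  have part1 : ∀ y ∈ orbitClosure x, Θ y ∈ orbitClosure (Θ x) := by
    intro y hy
    have h1 : Θ '' orbitClosure x ⊆ closure (Θ '' shiftOrbit x) :=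
      ContinuousOn.image_closure contTheta
    have h2 : Θ '' shiftOrbit x ⊆ shiftOrbit (Θ x) := by
      rintro w ⟨z, ⟨g, rfl⟩, rfl⟩
      exact ⟨eps g 0, (ytOrbit g).symm⟩
    exact closure_mono h2 (h1 ⟨y, hy, rfl⟩)
  have mulVecInj : ∀ u v : Fin d → ℤ, (P t).mulVec u = (P t).mulVec v → u = v := by
    intro u v huv
    have h0 : (P t).mulVec (u - v) = 0 := by
      rw [Matrix.mulVec_sub, huv, sub_self]
    have h1 : ((P t).adjugate * (P t)).mulVec (u - v) = 0 := by
      rw [← Matrix.mulVec_mulVec, h0, Matrix.mulVec_zero]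
    rw [Matrix.adjugate_mul] at h1
    have h2 : (P t).det • (u - v) = 0 := by
      rwa [Matrix.smul_mulVec, Matrix.one_mulVec] at h1
    have h3 : u - v = 0 := by
      funext i
      have h4 := congrFun h2 i
      simp only [Pi.smul_apply, smul_eq_mul, Pi.zero_apply] at h4
      rcases mul_eq_zero.mp h4 with h | h
      · exact absurd h (hP.1 t)
      · simpa using h
    exact sub_eq_zero.mp h3
  have memΓ : ∀ g : Fin d → ℤ, g ∈ Γ ↔ ∃ v, (P t).mulVec v = g := by
    intro g
    simp [hΓdef, matSub, AddMonoidHom.mem_range]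
  haveI : CompactSpace ↥(orbitClosure x) :=
    isCompact_iff_compactSpace.mp (isClosed_closure.isCompact)
  haveI hdq : DiscreteTopology ((Fin d → ℤ) ⧸ matSub (P t)) := by
    rw [discreteTopology_iff_isOpen_singleton]
    intro c
    obtain ⟨g₀, rfl⟩ := QuotientAddGroup.mk_surjective c
    have himg : ({(QuotientAddGroup.mk g₀ : (Fin d → ℤ) ⧸ matSub (P t))} : Set _) =
        QuotientAddGroup.mk '' {g₀} := by simp
    rw [himg]
    exact QuotientAddGroup.isOpenMap_coe _ (isOpen_discrete _)
  set X := orbitClosure x with hXdef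
  set Y := orbitClosure (Θ x) with hYdef
  let F : ↥X → ((Fin d → ℤ) ⧸ matSub (P t)) × ↥Y :=
    fun y => (QuotientAddGroup.mk (πt ↑y), ⟨Θ ↑y, part1 ↑y y.2⟩)
  have Fcont : Continuous F := by
    refine Continuous.prodMk ?_ (Continuous.subtype_mk ?_ _)
    · rw [continuous_iff_continuousAt]
      intro y₀
      obtain ⟨E, hE⟩ := locConst ↑y₀ y₀.2
      have hU : (Subtype.val ⁻¹' {z : (Fin d → ℤ) → A |
          ∀ p ∈ E, z p = (y₀ : (Fin d → ℤ) → A) p}) ∈ 𝓝 y₀ :=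
        ((openAgree E ↑y₀).preimage continuous_subtype_val).mem_nhds (fun p _ => rfl)
      refine ContinuousAt.congr (continuousAt_const
        (y := (QuotientAddGroup.mk (πt ↑y₀) : (Fin d → ℤ) ⧸ matSub (P t)))) ?_
      filter_upwards [hU] with z hzU
      show (QuotientAddGroup.mk (πt ↑y₀) : (Fin d → ℤ) ⧸ matSub (P t)) =
        QuotientAddGroup.mk (πt ↑z)
      rw [hE ↑z z.2 hzU]
    · exact continuousOn_iff_continuous_restrict.mp contTheta
  have Finj : Function.Injective F := by
    intro y z hEq
    have h1 : (QuotientAddGroup.mk (πt ↑y) : (Fin d → ℤ) ⧸ matSub (P t)) =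
        QuotientAddGroup.mk (πt ↑z) := congrArg Prod.fst hEq
    have h2 : Θ ↑y = Θ ↑z := congrArg Subtype.val (congrArg Prod.snd hEq)
    have hππ : πt (↑y : (Fin d → ℤ) → A) = πt ↑z := by
      apply fundUniq _ _ (hπt _ y.2).1 (hπt _ z.2).1
      have h3 := QuotientAddGroup.eq.mp h1
      have h4 : πt (↑y : (Fin d → ℤ) → A) - πt ↑z = -(-(πt ↑y) + πt ↑z) := by abel
      rw [h4]; exact neg_mem h3
    apply Subtype.ext
    funext h
    obtain ⟨v, hv⟩ := (memΓ _).mp (hψ (h + πt (↑y : (Fin d → ℤ) → A))).2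
    have harg : ψ (h + πt (↑y : (Fin d → ℤ) → A)) + (P t).mulVec v
        - πt (↑y : (Fin d → ℤ) → A) = h := by
      rw [hv]; abel
    have e1 : Θ ↑y v ⟨ψ (h + πt (↑y : (Fin d → ℤ) → A)), (hψ _).1⟩ = (↑y : (Fin d → ℤ) → A) h := by
      show (↑y : (Fin d → ℤ) → A) (ψ (h + πt ↑y) + (P t).mulVec v - πt ↑y) = _
      rw [harg]
    have e2 : Θ ↑z v ⟨ψ (h + πt (↑y : (Fin d → ℤ) → A)), (hψ _).1⟩ = (↑z : (Fin d → ℤ) → A) h := by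
      show (↑z : (Fin d → ℤ) → A) (ψ (h + πt ↑y) + (P t).mulVec v - πt ↑z) = _
      rw [← hππ, harg]
    rw [← e1, ← e2, h2]
  have Fsurj : Function.Surjective F := by
    rintro ⟨c, w⟩
    have hclosed : IsClosed (Set.range F) := (isCompact_range Fcont).isClosed
    have horbit : ∀ w' : ↥Y, (↑w' : (Fin d → ℤ) → (↥(D t) → A)) ∈ shiftOrbit (Θ x) →
        (c, w') ∈ Set.range F := by
      intro w' hw'
      obtain ⟨h, hh⟩ := hw'
      obtain ⟨g₀, hg₀⟩ := QuotientAddGroup.mk_surjective c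
      set c₀ := ψ g₀ with hc₀def
      set g := (P t).mulVec h + c₀ with hgdef
      have hgc₀ : g - c₀ ∈ Γ := by
        rw [memΓ]; exact ⟨h, by rw [hgdef]; abel⟩
      have hψg : ψ g = c₀ := by
        apply fundUniq _ _ (hψ g).1 (hψ g₀).1
        have h3 : ψ g - c₀ = -(g - ψ g) + (g - c₀) := by abel
        rw [h3]; exact add_mem (neg_mem (hψ g).2) hgc₀
      have hπg : πt (shiftArr g x) = c₀ := by
        rw [piShift x hxcl g, piX0, add_zero]; exact hψg
      have hepsg : eps g 0 = h := by
        apply mulVecInj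
        rw [heps g 0, psi0, add_zero, add_zero, hψg, hgdef]
        abel
      refine ⟨⟨shiftArr g x, shiftMem x hxcl g⟩, ?_⟩
      have hfst : (QuotientAddGroup.mk (πt (shiftArr g x)) : (Fin d → ℤ) ⧸ matSub (P t)) = c := by
        rw [hπg, ← hg₀, QuotientAddGroup.eq]
        have h3 : -c₀ + g₀ = g₀ - ψ g₀ := by rw [hc₀def]; abel
        rw [h3]; exact (hψ g₀).2
      have hsnd : Θ (shiftArr g x) = ↑w' := by
        rw [ytOrbit g, hepsg]; exact hh
      exact Prod.ext hfst (Subtype.ext hsnd)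
    have hdense : w ∈ closure (Subtype.val ⁻¹' shiftOrbit (Θ x) : Set ↥Y) := by
      rw [closure_subtype]
      have himg : Subtype.val '' (Subtype.val ⁻¹' shiftOrbit (Θ x) : Set ↥Y) =
          shiftOrbit (Θ x) := by
        rw [Set.image_preimage_eq_inter_range, Subtype.range_val]
        exact Set.inter_eq_left.mpr subset_closure
      rw [himg]
      exact w.2
    have hTclosed : IsClosed {w' : ↥Y | (c, w') ∈ Set.range F} := by
      have : {w' : ↥Y | (c, w') ∈ Set.range F} =
          (fun w' : ↥Y => ((c, w') : ((Fin d → ℤ) ⧸ matSub (P t)) × ↥Y)) ⁻¹' Set.range F := rfl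
      rw [this]
      exact hclosed.preimage (Continuous.prodMk continuous_const continuous_id)
    have hsub : (Subtype.val ⁻¹' shiftOrbit (Θ x) : Set ↥Y) ⊆
        {w' : ↥Y | (c, w') ∈ Set.range F} := fun w' hw' => horbit w' hw'
    have := (closure_minimal hsub hTclosed) hdense
    exact this
  let e₀ : ↥X ≃ (((Fin d → ℤ) ⧸ matSub (P t)) × ↥Y) := Equiv.ofBijective F ⟨Finj, Fsurj⟩
  have he₀ : Continuous e₀ := Fcont
  refine ⟨fun y hy => part1 y hy, ⟨he₀.homeoOfEquivCompactToT2, fun y => ⟨rfl, rfl⟩⟩,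
    fun y hy g => part3 y hy g⟩

end ToeplitzPaper
end

section
/- Let (P_n)_{n∈ℕ} be a scale of diagonal matrices P_n ∈ ℤ^{d×d} with positive diagonal entries and increment (Q_n), Γ_n = P_n ℤ^d with ⋂_n Γ_n = {0}, and D′_n = P_n([0,1)^d) ∩ ℤ^d. Assume there is N ∈ ℕ such that (Q_n)_{i,i} ≥ 4 for all n ≥ N and all i ∈ {1,…,d}. Define r_n ∈ ℤ^d by (r_n)_i = ⌊(Q_n)_{i,i}/4⌋, and s_1 = 0, s_{n+1} = P_n r_n + s_n; set D_n = D′_n − s_n. Then: (i) ℤ^d = ⋃_n D_n; (ii) 0 ∈ D_n ⊆ D_{n+1}; (iii) D_n is a fundamental domain of ℤ^d/Γ_n; (iv) D_m = ⋃_{γ ∈ D_m ∩ Γ_n}(γ + D_n) for m > n; (v) (D_n)_{n∈ℕ} is a Følner sequence in ℤ^d. -/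
namespace ToeplitzPaper

open Filter Topology Set

variable {G : Type*} [AddCommGroup G]

/-- Auxiliary: a multiple of `p` greater than `-p` is nonnegative. -/
lemma dvd_nonneg_aux {p x : ℤ} (hp : 0 < p) (hd : p ∣ x) (h : -p < x) : 0 ≤ x := by
  obtain ⟨t, rfl⟩ := hd
  rcases le_or_gt 0 t with ht | ht
  · exact mul_nonneg hp.le ht
  · nlinarith

/-- Auxiliary: a multiple of `p` less than `p*e` is at most `p*e - p`. -/
lemma dvd_le_aux {p x e : ℤ} (hp : 0 < p) (hd : p ∣ x) (h : x < p * e) : x ≤ p * e - p := by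
  obtain ⟨t, rfl⟩ := hd
  have ht : t < e := lt_of_mul_lt_mul_left h hp.le
  nlinarith

/-- Weierstrass product inequality. -/
lemma weier {ι : Type*} (s : Finset ι) (x : ι → ℝ) (h0 : ∀ i ∈ s, 0 ≤ x i)
    (h1 : ∀ i ∈ s, x i ≤ 1) : 1 - ∑ i ∈ s, x i ≤ ∏ i ∈ s, (1 - x i) := by
  classical
  induction s using Finset.induction_on with
  | empty => simp
  | insert _ _ hns ih =>
    rename_i a s
    rw [Finset.sum_insert hns, Finset.prod_insert hns]
    have ha0 := h0 a (Finset.mem_insert_self a s)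
    have ha1 := h1 a (Finset.mem_insert_self a s)
    have ih' := ih (fun i hi => h0 i (Finset.mem_insert_of_mem hi))
      (fun i hi => h1 i (Finset.mem_insert_of_mem hi))
    have hsum : 0 ≤ ∑ i ∈ s, x i :=
      Finset.sum_nonneg fun i hi => h0 i (Finset.mem_insert_of_mem hi)
    nlinarith [mul_le_mul_of_nonneg_left ih' (by linarith : (0:ℝ) ≤ 1 - x a)]

/-- **Lemma.** Under the assumptions of the previous lemma, if moreover the
increment satisfies `(Q_n)_{i,i} ≥ 4` for all `n ≥ N`, then the shifted boxes
`D_n = D'_n − s_n` (with `(r_n)_i = ⌊(Q_n)_{i,i}/4⌋`, `s_0 = 0`,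
`s_{n+1} = P_n r_n + s_n`) satisfy: (i) `ℤ^d = ⋃_n D_n`;
(ii) `0 ∈ D_n ⊆ D_{n+1}`; (iii) `D_n` is a fundamental domain of `ℤ^d/Γ_n`;
(iv) `D_m = ⋃_{γ ∈ D_m ∩ Γ_n}(γ + D_n)` for `m > n`;
(v) `(D_n)` is a Følner sequence in `ℤ^d`. -/
theorem statement13 (d : ℕ) (P Q : ℕ → Matrix (Fin d) (Fin d) ℤ)
    (hdet : ∀ n, (P n).det ≠ 0) (hQ : ∀ n, P (n + 1) = P n * Q n)
    (hdiag : ∀ n, (P n).IsDiag) (hpos : ∀ n i, 0 < P n i i)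
    (hint : (⋂ n, (matSub (P n) : Set (Fin d → ℤ))) = {0})
    (N : ℕ) (hQ4 : ∀ n, N ≤ n → ∀ i, 4 ≤ Q n i i)
    (r : ℕ → Fin d → ℤ) (hr : ∀ n i, r n i = Q n i i / 4)
    (s : ℕ → Fin d → ℤ) (hs0 : s 0 = 0)
    (hsrec : ∀ n, s (n + 1) = (P n).mulVec (r n) + s n)
    (D : ℕ → Set (Fin d → ℤ)) (hD : ∀ n, D n = (fun v => v - s n) '' boxSet (P n)) :
    ((⋃ n, D n) = Set.univ) ∧
    (∀ n, (0 : Fin d → ℤ) ∈ D n ∧ D n ⊆ D (n + 1)) ∧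
    (∀ n, IsFundDomain (matSub (P n)) (D n)) ∧
    (∀ m n, n < m → D m =
      ⋃ γ ∈ D m ∩ (matSub (P n) : Set (Fin d → ℤ)), (γ + ·) '' D n) ∧
    IsFolnerSeq D := by
  classical
  -- basic diagonal facts
  have hmulVec : ∀ n (x : Fin d → ℤ) i, (P n).mulVec x i = P n i i * x i := by
    intro n x i
    conv_lhs => rw [← (hdiag n).diagonal_diag]
    simp [Matrix.mulVec_diagonal, Matrix.diag]
  have hpq : ∀ n i, P (n + 1) i i = P n i i * Q n i i := by
    intro n i
    rw [hQ n, Matrix.mul_apply]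
    rw [Finset.sum_eq_single i]
    · intro j _ hj; rw [hdiag n (Ne.symm hj), zero_mul]
    · simp
  have hq1 : ∀ n i, 1 ≤ Q n i i := by
    intro n i
    have h1 := hpos (n + 1) i
    have h2 := hpos n i
    rw [hpq] at h1
    nlinarith
  have hsrec' : ∀ n i, s (n + 1) i = P n i i * r n i + s n i := by
    intro n i
    rw [hsrec n]
    simp [hmulVec]
  have hrange : ∀ n i, 0 ≤ s n i ∧ s n i < P n i i := by
    intro n
    induction n with
    | zero => intro i; simp [hs0]; exact hpos 0 i
    | succ n ih =>
      intro i
      obtain ⟨h1, h2⟩ := ih i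
      have hq := hq1 n i
      have hp := hpos n i
      have hrq : 0 ≤ r n i ∧ r n i + 1 ≤ Q n i i := by rw [hr n i]; omega
      rw [hsrec' n i, hpq n i]
      constructor
      · have := mul_nonneg hp.le hrq.1; linarith
      · nlinarith [hrq.1, hrq.2]
  have hDmem : ∀ n (g : Fin d → ℤ), g ∈ D n ↔ ∀ i, 0 ≤ g i + s n i ∧ g i + s n i < P n i i := by
    intro n g
    rw [hD n]
    constructor
    · rintro ⟨v, hv, rfl⟩ i
      have := hv i
      simpa using this
    · intro h
      exact ⟨g + s n, fun i => by simpa using h i, by simp⟩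
  have hΓmem : ∀ n (v : Fin d → ℤ), v ∈ matSub (P n) ↔ ∀ i, P n i i ∣ v i := by
    intro n v
    constructor
    · rintro ⟨x, rfl⟩ i
      exact ⟨x i, (hmulVec n x i)⟩
    · intro h
      refine ⟨fun i => v i / P n i i, funext fun i => ?_⟩
      show (P n).mulVec _ i = v i
      rw [hmulVec]
      exact Int.mul_ediv_cancel' (h i)
  -- growth estimates
  have hgrow : ∀ (k : ℕ) (i : Fin d),
      (k : ℤ) ≤ s (N + k) i ∧ (k : ℤ) + 1 ≤ P (N + k) i i - s (N + k) i := by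
    intro k
    induction k with
    | zero =>
      intro i
      have := hrange N i
      simp only [Nat.add_zero, Nat.cast_zero]
      omega
    | succ k ih =>
      intro i
      obtain ⟨ih1, ih2⟩ := ih i
      have hq := hQ4 (N + k) (Nat.le_add_right N k) i
      have hrq : 1 ≤ r (N + k) i ∧ 2 ≤ Q (N + k) i i - r (N + k) i - 1 := by
        rw [hr (N + k) i]; omega
      have hp := hpos (N + k) i
      have hp1 : (1 : ℤ) ≤ P (N + k) i i := hp
      rw [show N + (k + 1) = (N + k) + 1 from rfl, hsrec' (N + k) i, hpq (N + k) i]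
      push_cast
      constructor
      · nlinarith [hrq.1]
      · nlinarith [hrq.1, hrq.2]
  have htop : ∀ i : Fin d, Tendsto (fun n => P n i i) atTop atTop := by
    intro i
    have hmono : Monotone fun n => P n i i := by
      refine monotone_nat_of_le_succ fun n => ?_
      rw [hpq n i]
      nlinarith [hpos n i, hq1 n i]
    rw [Filter.tendsto_atTop]
    intro b
    rw [Filter.eventually_atTop]
    refine ⟨N + b.toNat, fun n hn => ?_⟩
    have h1 := hmono hn
    have h2 := hgrow b.toNat i
    have h3 := hrange (N + b.toNat) i
    simp only at h1
    omega
  -- divisibility facts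
  have hPdvd : ∀ n m, n ≤ m → ∀ i, P n i i ∣ P m i i := by
    intro n m h i
    induction m, h using Nat.le_induction with
    | base => exact dvd_refl _
    | succ m hm ih => rw [hpq m i]; exact ih.mul_right _
  have hsdvd : ∀ n m, n ≤ m → ∀ i, P n i i ∣ s m i - s n i := by
    intro n m h i
    induction m, h using Nat.le_induction with
    | base => simp
    | succ m hm ih =>
      rw [hsrec' m i, show P m i i * r m i + s m i - s n i
        = P m i i * r m i + (s m i - s n i) by ring]
      exact dvd_add ((hPdvd n m hm i).mul_right _) ih
  -- finset description of D n
  have hDfin : ∀ n, D n =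
      ↑(Fintype.piFinset (fun i => Finset.Ico (-(s n i)) (P n i i - s n i))) := by
    intro n
    ext g
    rw [hDmem]
    simp only [Finset.coe_sort_coe, Finset.mem_coe, Fintype.mem_piFinset, Finset.mem_Ico]
    exact forall_congr' fun i => by omega
  refine ⟨?_, ?_, ?_, ?_, ?_, ?_, ?_⟩
  · -- (i) union
    ext g
    simp only [Set.mem_iUnion, Set.mem_univ, iff_true]
    set k := Finset.univ.sup (fun i => (g i).natAbs + 1) with hk
    refine ⟨N + k, ?_⟩
    rw [hDmem]
    intro i
    have hki : (g i).natAbs + 1 ≤ k :=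
      Finset.le_sup (f := fun i => (g i).natAbs + 1) (Finset.mem_univ i)
    have := hgrow k i
    omega
  · -- (ii)
    intro n
    constructor
    · rw [hDmem]
      intro i
      have := hrange n i
      simpa using this
    · intro g hg
      rw [hDmem] at hg ⊢
      intro i
      obtain ⟨h1, h2⟩ := hg i
      have hp := hpos n i
      have hrq : 0 ≤ r n i ∧ r n i + 1 ≤ Q n i i := by
        rw [hr n i]; have := hq1 n i; omega
      rw [hsrec' n i, hpq n i]
      constructor
      · nlinarith [hrq.1]
      · nlinarith [hrq.1, hrq.2]
  · -- (iii) fundamental domain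
    intro n g
    refine ⟨fun i => g i - P n i i * ((g i + s n i) / P n i i), ⟨?_, ?_⟩, ?_⟩
    · rw [hDmem]
      intro i
      have hp := hpos n i
      have : g i - P n i i * ((g i + s n i) / P n i i) + s n i = (g i + s n i) % P n i i := by
        rw [Int.emod_def]; ring
      rw [this]
      exact ⟨Int.emod_nonneg _ hp.ne', Int.emod_lt_of_pos _ hp⟩
    · rw [hΓmem]
      intro i
      exact ⟨(g i + s n i) / P n i i, by simp only [Pi.sub_apply]; ring⟩
    · rintro y ⟨hy, hyΓ⟩
      rw [hDmem] at hy
      rw [hΓmem] at hyΓ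
      funext i
      have h1 := hyΓ i
      simp only [Pi.sub_apply] at h1
      have h2 : P n i i ∣ g i - (g i - P n i i * ((g i + s n i) / P n i i)) := by
        simpa using Dvd.intro _ rfl
      have h3 : P n i i ∣ y i - (g i - P n i i * ((g i + s n i) / P n i i)) := by
        have := dvd_sub h2 h1
        have he : y i - (g i - P n i i * ((g i + s n i) / P n i i)) =
            g i - (g i - P n i i * ((g i + s n i) / P n i i)) - (g i - y i) := by
          ring
        rw [he]; exact this
      have hy' := hy i
      have hdd : 0 ≤ (g i - P n i i * ((g i + s n i) / P n i i)) + s n i ∧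
          (g i - P n i i * ((g i + s n i) / P n i i)) + s n i < P n i i := by
        have hp := hpos n i
        have : g i - P n i i * ((g i + s n i) / P n i i) + s n i = (g i + s n i) % P n i i := by
          rw [Int.emod_def]; ring
        rw [this]
        exact ⟨Int.emod_nonneg _ hp.ne', Int.emod_lt_of_pos _ hp⟩
      have := Int.eq_zero_of_abs_lt_dvd h3 (by rw [abs_lt]; omega)
      omega
  · -- (iv)
    intro m n hnm
    ext g
    simp only [Set.mem_iUnion, Set.mem_inter_iff, Set.mem_image, exists_prop, SetLike.mem_coe]
    constructor
    · intro hg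
      set dd : Fin d → ℤ := fun i => g i - P n i i * ((g i + s n i) / P n i i) with hdd
      have hddD : dd ∈ D n := by
        rw [hDmem]
        intro i
        have hp := hpos n i
        have : dd i + s n i = (g i + s n i) % P n i i := by
          rw [Int.emod_def, hdd]; ring
        rw [this]
        exact ⟨Int.emod_nonneg _ hp.ne', Int.emod_lt_of_pos _ hp⟩
      refine ⟨g - dd, ⟨?_, ?_⟩, dd, hddD, by simp⟩
      · rw [hDmem]
        intro i
        have hp := hpos n i
        obtain ⟨e, he⟩ := hPdvd n m hnm.le i
        have hddi := (hDmem n dd).mp hddD i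
        have hgi := (hDmem m g).mp hg i
        have hsn := hrange n i
        have hdvd : P n i i ∣ (g - dd) i + s m i - s n i := by
          have h2 : P n i i ∣ (g - dd) i := by
            simp only [Pi.sub_apply, hdd]
            simpa using Dvd.intro _ rfl
          have := dvd_add h2 (hsdvd n m hnm.le i)
          simpa [add_sub_assoc] using this
        have hlow : 0 ≤ (g - dd) i + s m i - s n i := by
          refine dvd_nonneg_aux hp hdvd ?_
          simp only [Pi.sub_apply]
          omega
        have hhigh : (g - dd) i + s m i - s n i ≤ P n i i * e - P n i i := by
          refine dvd_le_aux hp hdvd ?_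
          rw [← he]
          simp only [Pi.sub_apply]
          omega
        rw [he] at hgi
        simp only [Pi.sub_apply] at *
        omega
      · rw [hΓmem]
        intro i
        simp only [Pi.sub_apply, hdd]
        simpa using Dvd.intro _ rfl
    · rintro ⟨γ, ⟨hγm, hγΓ⟩, y, hy, rfl⟩
      rw [hDmem] at hγm hy ⊢
      rw [hΓmem] at hγΓ
      intro i
      have hp := hpos n i
      obtain ⟨e, he⟩ := hPdvd n m hnm.le i
      have h1 := hγm i
      have h2 := hy i
      have hsn := hrange n i
      have hdvd : P n i i ∣ γ i + s m i - s n i := by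
        have := dvd_add (hγΓ i) (hsdvd n m hnm.le i)
        simpa [add_sub_assoc] using this
      have hlow : 0 ≤ γ i + s m i - s n i := dvd_nonneg_aux hp hdvd (by omega)
      have hhigh : γ i + s m i - s n i ≤ P n i i * e - P n i i :=
        dvd_le_aux hp hdvd (by rw [← he]; omega)
      rw [he] at h1 ⊢
      simp only [Pi.add_apply]
      omega
  · -- (v) finite
    intro n
    rw [hDfin n]
    exact (Fintype.piFinset _).finite_toSet
  · -- (v) nonempty
    intro n
    refine ⟨0, ?_⟩
    rw [hDmem]
    intro i
    have := hrange n i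
    simpa using this
  · -- (v) Følner property
    intro g
    have himg : ∀ n, (g + ·) '' D n =
        ↑(Fintype.piFinset (fun i => Finset.Ico (-(s n i) + g i) (P n i i - s n i + g i))) := by
      intro n
      rw [hDfin n]
      ext y
      simp only [Set.mem_image, Finset.mem_coe, Fintype.mem_piFinset, Finset.mem_Ico]
      constructor
      · rintro ⟨x, hx, rfl⟩ i
        have := hx i
        simp only [Pi.add_apply]
        omega
      · intro h
        refine ⟨y - g, fun i => ?_, by simp⟩
        have := h i
        simp only [Pi.sub_apply]
        omega
    set c : Fin d → ℕ := fun i => (g i).natAbs with hc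
    set X : ℕ → Finset (Fin d → ℤ) := fun n =>
      Fintype.piFinset (fun i => Finset.Ico (-(s n i) + g i) (P n i i - s n i + g i)) with hX
    set Y : ℕ → Finset (Fin d → ℤ) := fun n =>
      Fintype.piFinset (fun i => Finset.Ico (-(s n i)) (P n i i - s n i)) with hY
    have hiXY : ∀ n, X n ∩ Y n = Fintype.piFinset (fun i =>
        Finset.Ico (-(s n i) + g i) (P n i i - s n i + g i) ∩
        Finset.Ico (-(s n i)) (P n i i - s n i)) := by
      intro n
      ext x
      simp only [Finset.mem_inter, Fintype.mem_piFinset, hX, hY]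
      exact (forall_and).symm
    have hIcard : ∀ n, (X n ∩ Y n).card = ∏ i, (P n i i - (c i : ℤ)).toNat := by
      intro n
      rw [hiXY, Fintype.card_piFinset]
      refine Finset.prod_congr rfl fun i _ => ?_
      rw [Finset.Ico_inter_Ico, Int.card_Ico]
      simp only [hc]
      omega
    have hYcard : ∀ n, (Y n).card = ∏ i, (P n i i).toNat := by
      intro n
      rw [hY, Fintype.card_piFinset]
      refine Finset.prod_congr rfl fun i _ => ?_
      rw [Int.card_Ico]
      omega
    have hXcard : ∀ n, (X n).card = ∏ i, (P n i i).toNat := by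
      intro n
      rw [hX, Fintype.card_piFinset]
      refine Finset.prod_congr rfl fun i _ => ?_
      rw [Int.card_Ico]
      omega
    have hsymmcard : ∀ n, (symmDiff (X n) (Y n)).card + 2 * (X n ∩ Y n).card
        = (X n).card + (Y n).card := by
      intro n
      have h1 := Finset.card_inter_add_card_sdiff (X n) (Y n)
      have h2 := Finset.card_inter_add_card_sdiff (Y n) (X n)
      have h3 : (symmDiff (X n) (Y n)).card = (X n \ Y n).card + (Y n \ X n).card := by
        rw [symmDiff_def, Finset.sup_eq_union]
        exact Finset.card_union_of_disjoint (disjoint_sdiff_sdiff)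
      rw [Finset.inter_comm] at h2
      omega
    have hfeq : ∀ n, (symmDiff ((g + ·) '' D n) (D n)).ncard = (symmDiff (X n) (Y n)).card := by
      intro n
      rw [himg n, hDfin n, ← Finset.coe_symmDiff, Set.ncard_coe_finset]
    have hDcard : ∀ n, (D n).ncard = ∏ i, (P n i i).toNat := by
      intro n
      rw [hDfin n, Set.ncard_coe_finset]
      exact hYcard n
    have hev : ∀ᶠ n in atTop, ∀ i, (c i : ℤ) ≤ P n i i := by
      rw [Filter.eventually_all]
      intro i
      exact (Filter.tendsto_atTop.mp (htop i)) _
    apply squeeze_zero' (g := fun n => 2 * ∑ i, (c i : ℝ) / (P n i i : ℝ))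
    · filter_upwards with n
      positivity
    · filter_upwards [hev] with n hn
      set V : ℕ := ∏ i, (P n i i).toNat with hV
      set I : ℕ := ∏ i, (P n i i - (c i : ℤ)).toNat with hI
      have hIV : I ≤ V := by
        refine Finset.prod_le_prod' fun i _ => ?_
        exact Int.toNat_le_toNat (by have := (hn i); omega)
      have hVr : (V : ℝ) = ∏ i, ((P n i i : ℤ) : ℝ) := by
        rw [hV, Nat.cast_prod]
        refine Finset.prod_congr rfl fun i _ => ?_
        rw [← Int.cast_natCast, Int.toNat_of_nonneg (hpos n i).le]
      have hIr : (I : ℝ) = ∏ i, ((P n i i : ℤ) - (c i : ℤ) : ℝ) := by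
        rw [hI, Nat.cast_prod]
        refine Finset.prod_congr rfl fun i _ => ?_
        rw [← Int.cast_natCast, Int.toNat_of_nonneg (by have := hn i; omega)]
        push_cast
        ring
      have hVpos : (0:ℝ) < V := by
        rw [hVr]
        exact Finset.prod_pos fun i _ => by exact_mod_cast hpos n i
      rw [hfeq n, hDcard n]
      have hcards : ((symmDiff (X n) (Y n)).card : ℝ) = 2 * V - 2 * I := by
        have := hsymmcard n
        rw [hXcard n, hYcard n, hIcard n] at this
        have h2I : 2 * I ≤ 2 * V := by omega
        have : (symmDiff (X n) (Y n)).card = 2 * V - 2 * I := by omega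
        rw [this]
        push_cast [Nat.cast_sub h2I]
        ring
      rw [hcards]
      rw [div_le_iff₀ hVpos]
      have hw := weier Finset.univ (fun i => (c i : ℝ) / (P n i i : ℝ))
        (fun i _ => div_nonneg (by positivity) (by exact_mod_cast (hpos n i).le))
        (fun i _ => by
          rw [div_le_one (by exact_mod_cast hpos n i)]
          exact_mod_cast hn i)
      have hprodeq : ∏ i, (1 - (c i : ℝ) / (P n i i : ℝ)) = (I : ℝ) / (V : ℝ) := by
        rw [hIr, hVr, ← Finset.prod_div_distrib]
        refine Finset.prod_congr rfl fun i _ => ?_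
        have hpi : ((P n i i : ℤ) : ℝ) ≠ 0 := by
          have := hpos n i
          exact_mod_cast this.ne'
        field_simp
        push_cast; ring
      rw [hprodeq] at hw
      have h2 : (1 - ∑ i, (c i : ℝ) / (P n i i : ℝ)) * V ≤ (I : ℝ) := by
        have := mul_le_mul_of_nonneg_right hw hVpos.le
        rwa [div_mul_cancel₀ _ hVpos.ne'] at this
      nlinarith [h2]
    · have hterm : ∀ i : Fin d, Tendsto (fun n => (c i : ℝ) / (P n i i : ℝ))
          atTop (𝓝 0) := by
        intro i
        exact Filter.Tendsto.div_atTop tendsto_const_nhds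
          (tendsto_intCast_atTop_atTop.comp (htop i))
      have hsum := tendsto_finset_sum Finset.univ (fun i (_ : i ∈ Finset.univ) => hterm i)
      simpa using hsum.const_mul 2


end ToeplitzPaper
end

section
/- For every integer k ≥ 5, the sequence (λ_n(k))_{n≥0} defined by λ_n(k) = (1/p′_n) log q′_n is monotonically decreasing; in particular the limit λ(k) = lim_n λ_n(k) = inf_n λ_n(k) exists. -/
namespace ToeplitzPaper

open Filter Topology


/-- The pair `(p'_n, q'_n)` of sequences: `p'_0 = 1`, `q'_0 = k`,
`p'_{n+1} = p'_n q'_n`, `q'_{n+1} = (q'_n − 1)!`. -/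
def grill (k : ℕ) : ℕ → ℕ × ℕ
  | 0 => (1, k)
  | n + 1 => ((grill k n).1 * (grill k n).2, Nat.factorial ((grill k n).2 - 1))

/-- The sequence `p'_n = p'_n(k)`. -/
def pSeq' (k n : ℕ) : ℕ := (grill k n).1

/-- The sequence `q'_n = q'_n(k)`. -/
def qSeq' (k n : ℕ) : ℕ := (grill k n).2

/-- `λ_n(k) = (1/p'_n) log q'_n` (natural logarithm). -/
noncomputable def lamSeq (k : ℕ) (n : ℕ) : ℝ := Real.log (qSeq' k n) / (pSeq' k n)

lemma q_ge (k : ℕ) (hk : 5 ≤ k) : ∀ n, 5 ≤ qSeq' k n := by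
  intro n
  induction n with
  | zero => exact hk
  | succ n ih =>
      have h4 : 4 ≤ qSeq' k n - 1 := by omega
      have : Nat.factorial 4 ≤ Nat.factorial (qSeq' k n - 1) := Nat.factorial_le h4
      norm_num [Nat.factorial] at this
      simp only [qSeq', grill] at *
      omega

lemma p_pos (k : ℕ) (hk : 5 ≤ k) : ∀ n, 0 < pSeq' k n := by
  intro n
  induction n with
  | zero => simp [pSeq', grill]
  | succ n ih =>
      have hq := q_ge k hk n
      simp only [pSeq', grill] at *
      exact Nat.mul_pos ih (by unfold qSeq' at hq; omega)

lemma anti (k : ℕ) (hk : 5 ≤ k) : ∀ n, lamSeq k (n + 1) ≤ lamSeq k n := by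
  intro n
  have hq := q_ge k hk n
  have hp := p_pos k hk n
  set p := pSeq' k n with hpdef
  set q := qSeq' k n with hqdef
  have hq1 : qSeq' k (n + 1) = Nat.factorial (q - 1) := rfl
  have hp1 : pSeq' k (n + 1) = p * q := rfl
  have hfact : Nat.factorial (q - 1) ≤ q ^ q := by
    calc Nat.factorial (q - 1) ≤ Nat.factorial q := Nat.factorial_le (by omega)
    _ ≤ q ^ q := Nat.factorial_le_pow q
  have hlog : Real.log (Nat.factorial (q - 1)) ≤ q * Real.log q := by
    have := Real.log_le_log (by positivity : (0:ℝ) < Nat.factorial (q - 1))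
      (show (Nat.factorial (q - 1) : ℝ) ≤ (q : ℝ) ^ q by exact_mod_cast hfact)
    rwa [Real.log_pow] at this
  have hppos : (0:ℝ) < p := by exact_mod_cast hp
  have hqpos : (0:ℝ) < q := by positivity
  unfold lamSeq
  rw [hq1, hp1]
  push_cast
  rw [div_le_div_iff₀ (by positivity) hppos]
  calc Real.log (Nat.factorial (q - 1)) * p ≤ (q * Real.log q) * p :=
        mul_le_mul_of_nonneg_right hlog hppos.le
  _ = Real.log q * (p * q) := by ring

/-- **Lemma (i).** For `k ≥ 5` the sequence `(λ_n(k))_n` is monotonically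
decreasing; in particular its limit exists and equals `inf_n λ_n(k)`. -/
theorem statement14 (k : ℕ) (hk : 5 ≤ k) :
    (∀ n : ℕ, lamSeq k (n + 1) ≤ lamSeq k n) ∧
    Tendsto (lamSeq k) atTop (𝓝 (⨅ n : ℕ, lamSeq k n)) := by
  refine ⟨anti k hk, ?_⟩
  have hanti : Antitone (lamSeq k) := antitone_nat_of_succ_le (anti k hk)
  have hbdd : BddBelow (Set.range (lamSeq k)) := by
    refine ⟨0, ?_⟩
    rintro x ⟨n, rfl⟩
    have hq := q_ge k hk n
    have hp := p_pos k hk n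
    have : 0 ≤ Real.log (qSeq' k n) := Real.log_nonneg (by exact_mod_cast hq.trans' (by norm_num))
    exact div_nonneg this (by positivity)
  exact tendsto_atTop_ciInf hanti hbdd

end ToeplitzPaper
end

section
/- For every integer k ≥ 5, the limit λ(k) = lim_n λ_n(k) satisfies λ(k) > log k − 5. -/
namespace ToeplitzPaper

open Filter Topology


lemma p_ge (k : ℕ) (hk : 5 ≤ k) : ∀ n, 5 ^ n ≤ pSeq' k n := by
  intro n
  induction n with
  | zero => simp [pSeq', grill]
  | succ n ih =>
      show 5 ^ (n+1) ≤ pSeq' k n * qSeq' k n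
      calc 5 ^ (n+1) = 5 ^ n * 5 := by ring
        _ ≤ pSeq' k n * qSeq' k n := Nat.mul_le_mul ih (q_ge k hk n)

/-- `m log m − m ≤ log m!` -/
lemma log_factorial_lb : ∀ m : ℕ, (m : ℝ) * Real.log m - m ≤ Real.log (Nat.factorial m) := by
  intro m
  induction m with
  | zero => simp
  | succ m ih =>
      have h1 : Real.log (Nat.factorial (m+1)) = Real.log (m+1) + Real.log (Nat.factorial m) := by
        rw [Nat.factorial_succ, Nat.cast_mul]
        rw [Real.log_mul (by positivity) (by exact_mod_cast (Nat.factorial_pos m).ne')]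
        push_cast; ring
      have key : (m : ℝ) * Real.log (m+1) - (m : ℝ) * Real.log m ≤ 1 := by
        rcases Nat.eq_zero_or_pos m with h | h
        · simp [h]
        · have hm : (0:ℝ) < m := by exact_mod_cast h
          have : Real.log ((m+1)/m) ≤ (m+1)/m - 1 :=
            Real.log_le_sub_one_of_pos (by positivity)
          rw [Real.log_div (by positivity) (ne_of_gt hm)] at this
          have h2 : ((m:ℝ)+1)/m - 1 = 1/m := by field_simp; ring
          rw [h2] at this
          calc (m : ℝ) * Real.log (m+1) - (m : ℝ) * Real.log m
              = m * (Real.log (m+1) - Real.log m) := by ring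
            _ ≤ m * (1/m) := by
                apply mul_le_mul_of_nonneg_left _ (le_of_lt hm)
                linarith
            _ = 1 := by field_simp
      have := ih
      push_cast [h1]
      push_cast at this key
      nlinarith [this, key]

/-- step bound: for `5 ≤ q`, `q log q − log (q−1)! ≤ 3q`. -/
lemma step_bound (q : ℕ) (hq : 5 ≤ q) :
    (q : ℝ) * Real.log q - Real.log (Nat.factorial (q - 1)) ≤ 3 * q := by
  have hq1 : (1:ℝ) ≤ (q:ℝ) - 1 := by
    have : (5:ℝ) ≤ q := by exact_mod_cast hq
    linarith
  have hcast : ((q - 1 : ℕ) : ℝ) = (q : ℝ) - 1 := by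
    have : 1 ≤ q := by omega
    push_cast [this]; ring
  have hf : ((q:ℝ) - 1) * Real.log ((q:ℝ) - 1) - ((q:ℝ) - 1)
      ≤ Real.log (Nat.factorial (q - 1)) := by
    have := log_factorial_lb (q - 1)
    rwa [hcast] at this
  have hgap : ((q:ℝ) - 1) * (Real.log q - Real.log ((q:ℝ)-1)) ≤ 1 := by
    have hpos : (0:ℝ) < (q:ℝ) - 1 := by linarith
    have : Real.log ((q:ℝ)/((q:ℝ)-1)) ≤ (q:ℝ)/((q:ℝ)-1) - 1 :=
      Real.log_le_sub_one_of_pos (by positivity)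
    rw [Real.log_div (by positivity) (ne_of_gt hpos)] at this
    have h2 : (q:ℝ)/((q:ℝ)-1) - 1 = 1/((q:ℝ)-1) := by field_simp; ring
    rw [h2] at this
    calc ((q:ℝ) - 1) * (Real.log q - Real.log ((q:ℝ)-1))
        ≤ ((q:ℝ) - 1) * (1/((q:ℝ)-1)) := mul_le_mul_of_nonneg_left this (by linarith)
      _ = 1 := by field_simp
  have hlogq : Real.log q ≤ (q:ℝ) - 1 := Real.log_le_sub_one_of_pos (by positivity)
  nlinarith [hf, hgap, hlogq]

lemma lam_drop (k : ℕ) (hk : 5 ≤ k) (n : ℕ) :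
    lamSeq k n - lamSeq k (n + 1) ≤ 3 / (5:ℝ) ^ n := by
  have hq := q_ge k hk n
  have hp := p_ge k hk n
  set p := pSeq' k n with hpdef
  set q := qSeq' k n with hqdef
  have hp1 : 1 ≤ p := le_trans (Nat.one_le_pow _ _ (by norm_num)) hp
  have hppos : (0:ℝ) < p := by exact_mod_cast hp1
  have hqpos : (0:ℝ) < q := by positivity
  have h1 : lamSeq k (n+1) = Real.log (Nat.factorial (q - 1)) / ((p:ℝ) * q) := by
    show Real.log (qSeq' k (n+1)) / (pSeq' k (n+1)) = _
    have : qSeq' k (n+1) = Nat.factorial (q - 1) := rfl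
    have hp' : pSeq' k (n+1) = p * q := rfl
    rw [this, hp', Nat.cast_mul]
  have hstep := step_bound q hq
  have hdrop : lamSeq k n - lamSeq k (n+1)
      = ((q:ℝ) * Real.log q - Real.log (Nat.factorial (q - 1))) / ((p:ℝ) * q) := by
    rw [h1]
    show Real.log q / p - _ = _
    field_simp
  rw [hdrop]
  have hpq : (0:ℝ) < (p:ℝ) * q := by positivity
  calc ((q:ℝ) * Real.log q - Real.log (Nat.factorial (q - 1))) / ((p:ℝ) * q)
      ≤ 3 * q / ((p:ℝ) * q) := by gcongr
    _ = 3 / p := by field_simp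
    _ ≤ 3 / (5:ℝ) ^ n := by
        apply div_le_div_of_nonneg_left (by norm_num) (by positivity)
        exact_mod_cast hp

lemma lam_lb (k : ℕ) (hk : 5 ≤ k) (n : ℕ) : Real.log k - 15/4 ≤ lamSeq k n := by
  have h0 : lamSeq k 0 = Real.log k := by simp [lamSeq, qSeq', pSeq', grill]
  have htel : lamSeq k 0 - lamSeq k n
      = ∑ i ∈ Finset.range n, (lamSeq k i - lamSeq k (i + 1)) := by
    rw [Finset.sum_range_sub' (lamSeq k)]
  have hsum : ∑ i ∈ Finset.range n, (lamSeq k i - lamSeq k (i + 1))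
      ≤ ∑ i ∈ Finset.range n, 3 * (1/5:ℝ) ^ i := by
    apply Finset.sum_le_sum
    intro i _
    calc lamSeq k i - lamSeq k (i+1) ≤ 3 / (5:ℝ)^i := lam_drop k hk i
      _ = 3 * (1/5:ℝ)^i := by rw [div_pow, one_pow]; ring
  have hgeom : ∑ i ∈ Finset.range n, (1/5:ℝ) ^ i ≤ 5/4 := by
    rw [geom_sum_eq (by norm_num)]
    have h5 : (0:ℝ) ≤ (1/5:ℝ)^n := by positivity
    rw [div_le_iff_of_neg (by norm_num : ((1:ℝ)/5 - 1) < 0)]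
    nlinarith
  have : ∑ i ∈ Finset.range n, 3 * (1/5:ℝ) ^ i ≤ 15/4 := by
    rw [← Finset.mul_sum]
    linarith
  rw [h0] at htel
  linarith

/-- **Lemma (ii).** For `k ≥ 5` the limit `λ(k) = lim_n λ_n(k)` satisfies
`λ(k) > log k − 5`. -/
theorem statement15 (k : ℕ) (hk : 5 ≤ k)
    (L : ℝ) (hL : Tendsto (lamSeq k) atTop (𝓝 L)) :
    Real.log k - 5 < L := by
  have hlb : Real.log k - 15/4 ≤ L :=
    ge_of_tendsto hL (Eventually.of_forall (lam_lb k hk))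
  linarith

end ToeplitzPaper
end

section
/- For every integer k ≥ 5 the identity λ(k) = (1/k) · λ((k−1)!) holds, and λ(k) > 0. -/
namespace ToeplitzPaper

open Filter Topology


lemma logFacLB : ∀ m : ℕ, 1 ≤ m → (m:ℝ) * Real.log m - m + 1 ≤ Real.log (Nat.factorial m) := by
  intro m hm
  induction m, hm using Nat.le_induction with
  | base => simp
  | succ m hm ih =>
    have hm0 : (0:ℝ) < m := by exact_mod_cast hm
    have hfac : Real.log (Nat.factorial (m+1)) = Real.log (m+1) + Real.log (Nat.factorial m) := by
      rw [Nat.factorial_succ]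
      push_cast
      rw [Real.log_mul (by positivity) (by exact_mod_cast (Nat.factorial_pos m).ne')]
    have hlog : Real.log ((m:ℝ)+1) - Real.log m ≤ 1/m := by
      have h1 : Real.log (((m:ℝ)+1)/m) ≤ ((m:ℝ)+1)/m - 1 :=
        Real.log_le_sub_one_of_pos (by positivity)
      rw [Real.log_div (by positivity) (by positivity)] at h1
      have : ((m:ℝ)+1)/m - 1 = 1/m := by field_simp; ring
      linarith [this ▸ h1]
    have : (m:ℝ) * (Real.log ((m:ℝ)+1) - Real.log m) ≤ 1 := by
      calc (m:ℝ) * (Real.log ((m:ℝ)+1) - Real.log m) ≤ (m:ℝ) * (1/m) :=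
            mul_le_mul_of_nonneg_left hlog (le_of_lt hm0)
        _ = 1 := by field_simp
    rw [hfac]
    push_cast
    nlinarith [ih]

lemma log_le_aux {Q : ℝ} (hQ : 24 ≤ Q) : Real.log Q ≤ 3 + Q/24 := by
  have h24 : Real.log 24 ≤ 4 := by
    rw [Real.log_le_iff_le_exp (by norm_num)]
    have h := Real.exp_one_gt_d9
    have h4 : Real.exp 4 = (Real.exp 1)^4 := by
      rw [← Real.exp_nat_mul]; norm_num
    have h5 : (2.7182818283:ℝ)^4 ≤ (Real.exp 1)^4 := by
      apply pow_le_pow_left₀ (by norm_num) h.le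
    rw [h4]; nlinarith [h5]
  have hdiv : Real.log (Q/24) ≤ Q/24 - 1 := Real.log_le_sub_one_of_pos (by linarith)
  rw [Real.log_div (by linarith) (by norm_num)] at hdiv
  linarith

lemma stepB (q p : ℕ) (hq : 24 ≤ q) (α : ℝ)
    (h : α * p + 6/5 ≤ Real.log q) :
    α * (↑(p * q) : ℝ) + 6/5 ≤ Real.log (Nat.factorial (q - 1)) := by
  have hq1 : 1 ≤ q - 1 := by omega
  have hQ : (24:ℝ) ≤ (q:ℝ) := by exact_mod_cast hq
  have hcast : ((q - 1 : ℕ) : ℝ) = (q:ℝ) - 1 := by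
    have : 1 ≤ q := by omega
    push_cast [this]; ring
  have h1 := logFacLB (q - 1) hq1
  rw [hcast] at h1
  have h2 : Real.log (q:ℝ) - Real.log ((q:ℝ) - 1) ≤ 1/((q:ℝ)-1) := by
    have := Real.log_le_sub_one_of_pos (x := (q:ℝ)/((q:ℝ)-1)) (by apply div_pos <;> linarith)
    rw [Real.log_div (by linarith) (by linarith)] at this
    have hne : (q:ℝ)-1 ≠ 0 := by linarith
    have he : (q:ℝ)/((q:ℝ)-1) - 1 = 1/((q:ℝ)-1) := by field_simp; ring
    linarith [he ▸ this]
  have h3 : Real.log (q:ℝ) ≤ 3 + (q:ℝ)/24 := log_le_aux hQ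
  have k1 : ((q:ℝ) - 1) * (Real.log (q:ℝ) - 1/((q:ℝ)-1)) ≤ ((q:ℝ)-1) * Real.log ((q:ℝ)-1) := by
    apply mul_le_mul_of_nonneg_left (by linarith) (by linarith)
  have hne1 : (q:ℝ)-1 ≠ 0 := by linarith
  have k1' : ((q:ℝ) - 1) * (1/((q:ℝ)-1)) = 1 := by field_simp
  have k2 : (q:ℝ) * (α * p + 6/5) ≤ (q:ℝ) * Real.log (q:ℝ) :=
    mul_le_mul_of_nonneg_left h (by linarith)
  have hpc : ((p*q : ℕ):ℝ) = (p:ℝ)*(q:ℝ) := by push_cast; ring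
  rw [hpc]
  nlinarith [h1, k1, k2, h3]

lemma grill_shift (k : ℕ) : ∀ n, grill k (n+1) =
    (k * (grill (Nat.factorial (k-1)) n).1, (grill (Nat.factorial (k-1)) n).2) := by
  intro n
  induction n with
  | zero => simp [grill]
  | succ n ih =>
    have h : grill k (n+1+1) = ((grill k (n+1)).1 * (grill k (n+1)).2,
        Nat.factorial ((grill k (n+1)).2 - 1)) := rfl
    rw [h, ih]
    simp [grill, mul_assoc]

lemma pSeq'_pos (k : ℕ) (hk : 1 ≤ k) : ∀ n, 1 ≤ pSeq' k n := by
  intro n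
  induction n with
  | zero => simp [pSeq', grill]
  | succ n ih =>
    have hq : 1 ≤ qSeq' k n := by
      induction n with
      | zero => exact hk
      | succ m _ => exact (Nat.factorial_pos _)
    calc 1 ≤ pSeq' k n * qSeq' k n := Nat.one_le_iff_ne_zero.2 (by positivity)
      _ = pSeq' k (n+1) := rfl

lemma qSeq'_ge (k : ℕ) (hk : 5 ≤ k) : ∀ n, 5 ≤ qSeq' k n ∧ (1 ≤ n → 24 ≤ qSeq' k n) := by
  intro n
  induction n with
  | zero => exact ⟨hk, by omega⟩
  | succ n ih =>
    have h5 : 5 ≤ qSeq' k n := ih.1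
    have h24 : 24 ≤ Nat.factorial (qSeq' k n - 1) := by
      calc (24:ℕ) = Nat.factorial 4 := rfl
        _ ≤ Nat.factorial (qSeq' k n - 1) := Nat.factorial_le (by omega)
    have he : qSeq' k (n+1) = Nat.factorial (qSeq' k n - 1) := rfl
    rw [he]
    exact ⟨by omega, fun _ => h24⟩

/-- **Lemma (iii).** For `k ≥ 5` one has `λ(k) = (1/k)·λ((k−1)!)` and
`λ(k) > 0`. -/
theorem statement16 (k : ℕ) (hk : 5 ≤ k)
    (L L' : ℝ) (hL : Tendsto (lamSeq k) atTop (𝓝 L))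
    (hL' : Tendsto (lamSeq (Nat.factorial (k - 1))) atTop (𝓝 L')) :
    L = (1 / (k : ℝ)) * L' ∧ 0 < L := by
  have hk0 : (0:ℝ) < k := by positivity
  -- Part 1: the identity
  have hshift : ∀ n, lamSeq k (n+1) = (1 / (k:ℝ)) * lamSeq (Nat.factorial (k-1)) n := by
    intro n
    unfold lamSeq qSeq' pSeq'
    rw [grill_shift]
    push_cast
    ring
  have h1 : Tendsto (fun n => lamSeq k (n+1)) atTop (𝓝 L) :=
    hL.comp (tendsto_add_atTop_nat 1)
  have h2 : Tendsto (fun n => (1 / (k:ℝ)) * lamSeq (Nat.factorial (k-1)) n) atTop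
      (𝓝 ((1 / (k:ℝ)) * L')) := hL'.const_mul _
  have heq : (fun n => lamSeq k (n+1)) =
      (fun n => (1 / (k:ℝ)) * lamSeq (Nat.factorial (k-1)) n) := funext hshift
  rw [heq] at h1
  have hid : L = (1 / (k : ℝ)) * L' := tendsto_nhds_unique h1 h2
  -- Part 2: positivity
  set α : ℝ := (Real.log (Nat.factorial (k-1)) - 6/5) / k with hαdef
  have h24 : (24:ℕ) ≤ Nat.factorial (k-1) := by
    calc (24:ℕ) = Nat.factorial 4 := rfl
      _ ≤ Nat.factorial (k-1) := Nat.factorial_le (by omega)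
  have hlogfac : (6:ℝ)/5 < Real.log (Nat.factorial (k-1)) := by
    rw [Real.lt_log_iff_exp_lt (by exact_mod_cast Nat.lt_of_lt_of_le (by norm_num) h24)]
    have he2 : Real.exp (6/5) < Real.exp 2 := Real.exp_lt_exp.2 (by norm_num)
    have h4 : Real.exp 2 = (Real.exp 1)^2 := by rw [sq, ← Real.exp_add]; norm_num
    have h5 : (Real.exp 1)^2 < (2.7182818286:ℝ)^2 := by
      apply pow_lt_pow_left₀ Real.exp_one_lt_d9 (Real.exp_pos 1).le (by norm_num)
    calc Real.exp (6/5) < (Real.exp 1)^2 := h4 ▸ he2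
      _ < (2.7182818286:ℝ)^2 := h5
      _ ≤ 24 := by norm_num
      _ ≤ (Nat.factorial (k-1) : ℝ) := by exact_mod_cast h24
  have hα : 0 < α := by
    apply div_pos (by linarith) hk0
  have hp1 : pSeq' k 1 = k := by simp [pSeq', grill]
  have hq1 : qSeq' k 1 = Nat.factorial (k-1) := rfl
  have inv : ∀ n, α * (pSeq' k (n+1) : ℝ) + 6/5 ≤ Real.log (qSeq' k (n+1)) := by
    intro n
    induction n with
    | zero =>
      rw [hp1, hq1]
      have : α * k = Real.log (Nat.factorial (k-1)) - 6/5 := by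
        rw [hαdef]; field_simp
      linarith
    | succ n ih =>
      have hq24 : 24 ≤ qSeq' k (n+1) := (qSeq'_ge k hk (n+1)).2 (by omega)
      have hqe : qSeq' k (n+1+1) = Nat.factorial (qSeq' k (n+1) - 1) := rfl
      have hpe : pSeq' k (n+1+1) = pSeq' k (n+1) * qSeq' k (n+1) := rfl
      rw [hqe, hpe]
      exact stepB _ _ hq24 α ih
  have hbound : ∀ n ≥ 1, α ≤ lamSeq k n := by
    intro n hn
    obtain ⟨m, rfl⟩ : ∃ m, n = m + 1 := ⟨n - 1, by omega⟩
    have hp : (0:ℝ) < (pSeq' k (m+1) : ℝ) := by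
      exact_mod_cast pSeq'_pos k (by omega) (m+1)
    rw [lamSeq, le_div_iff₀ hp]
    have := inv m
    nlinarith
  have hαL : α ≤ L := ge_of_tendsto hL (eventually_atTop.2 ⟨1, hbound⟩)
  exact ⟨hid, lt_of_lt_of_le hα hαL⟩

end ToeplitzPaper
end

section
/- Let (P_n)_{n∈ℕ} be a scale of diagonal d×d integer matrices such that for every M ∈ ℕ and every i ∈ {1,…,d} there exists n ∈ ℕ with M dividing (P_n)_{i,i}. Let Γ_n = P_n ℤ^d and let G⃖ = lim← (ℤ^d/Γ_n) be the corresponding ℤ^d-odometer. Then G⃖ is the universal ℤ^d-odometer, i.e., every ℤ^d-odometer is a factor of (G⃖, ℤ^d). -/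
namespace ToeplitzPaper

open Filter Topology Set

variable {G : Type*} [AddCommGroup G]

variable [TopologicalSpace G]

/-- The ambient space `Π n, G/Γ_n` in which the `G`-odometer lives
(each quotient carries the quotient topology, the product the product
topology). -/
abbrev OdoPi (Γ : ℕ → AddSubgroup G) : Type _ := ∀ n : ℕ, G ⧸ Γ n

/-- The action of `G` on `Π n, G/Γ_n` by coordinatewise addition of cosets. -/
def odoShift (Γ : ℕ → AddSubgroup G) (g : G) (f : OdoPi Γ) : OdoPi Γ :=
  fun n => QuotientAddGroup.mk g + f n

/-- The odometer: the inverse limit of the quotients `G/Γ_n`, realised as the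
set of compatible sequences inside `Π n, G/Γ_n`. -/
def OdoSet (Γ : ℕ → AddSubgroup G) : Set (OdoPi Γ) :=
  {f | ∀ (n : ℕ) (g : G),
    f (n + 1) = QuotientAddGroup.mk g → f n = QuotientAddGroup.mk g}

/-- The odometer of `Γ'` is a factor of the odometer of `Γ`: there is a
continuous surjective equivariant map between them. -/
def OdoFactor (Γ Γ' : ℕ → AddSubgroup G) : Prop :=
  ∃ r : OdoPi Γ → OdoPi Γ', ContinuousOn r (OdoSet Γ) ∧
    r '' OdoSet Γ = OdoSet Γ' ∧
    ∀ f ∈ OdoSet Γ, ∀ g : G, r (odoShift Γ g f) = odoShift Γ' g (r f)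

/-- `Γ` defines the universal `G`-odometer: it is a `G`-odometer having every
`G`-odometer as a factor. -/
def IsUniversalOdo (Γ : ℕ → AddSubgroup G) : Prop :=
  (∀ n, Γ (n + 1) ≤ Γ n) ∧ (∀ n, (Γ n).FiniteIndex) ∧
  ∀ Γ' : ℕ → AddSubgroup G, (∀ n, Γ' (n + 1) ≤ Γ' n) →
    (∀ n, (Γ' n).FiniteIndex) → OdoFactor Γ Γ'

section Statement19Aux

private lemma quot_discrete' {H : Type*} [AddCommGroup H] [TopologicalSpace H] [DiscreteTopology H]
    (N : AddSubgroup H) : DiscreteTopology (H ⧸ N) := by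
  rw [discreteTopology_iff_forall_isOpen]
  intro s
  rw [isOpen_coinduced (f := (QuotientAddGroup.mk : H → H ⧸ N))]
  exact isOpen_discrete _

private lemma odo_back' {H : Type*} [AddCommGroup H] [TopologicalSpace H] {Γ : ℕ → AddSubgroup H}
    {f : OdoPi Γ} (hf : f ∈ OdoSet Γ) {a : ℕ} :
    ∀ b, a ≤ b → ∀ g : H, f b = QuotientAddGroup.mk g → f a = QuotientAddGroup.mk g := by
  intro b
  induction b with
  | zero =>
    intro h g hb
    obtain rfl : a = 0 := Nat.le_zero.mp h
    exact hb
  | succ n ih =>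
    intro h g hb
    rcases Nat.lt_or_ge a (n + 1) with h' | h'
    · exact ih (Nat.lt_succ_iff.mp h') g (hf n g hb)
    · obtain rfl : a = n + 1 := le_antisymm h h'
      exact hb

private lemma const_mem_odoSet' {H : Type*} [AddCommGroup H] [TopologicalSpace H]
    {Γ : ℕ → AddSubgroup H} (hΓ : ∀ n, Γ (n + 1) ≤ Γ n) (x : H) :
    (fun n => (QuotientAddGroup.mk x : H ⧸ Γ n)) ∈ OdoSet Γ := by
  intro n g h
  rw [QuotientAddGroup.eq] at h ⊢
  exact hΓ n h

private lemma mem_matSub_diag' {d : ℕ} {P : Matrix (Fin d) (Fin d) ℤ} (hP : P.IsDiag)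
    {g : Fin d → ℤ} : g ∈ matSub P ↔ ∀ i, P i i ∣ g i := by
  constructor
  · intro hg
    obtain ⟨v, rfl⟩ := AddMonoidHom.mem_range.mp hg
    intro i
    refine ⟨v i, ?_⟩
    show (P.mulVecLin v) i = P i i * v i
    simp only [Matrix.mulVecLin_apply, Matrix.mulVec, dotProduct]
    rw [Finset.sum_eq_single i]
    · intro j _ hj
      rw [hP (Ne.symm hj), zero_mul]
    · intro h
      exact absurd (Finset.mem_univ i) h
  · intro h
    choose v hv using h
    refine AddMonoidHom.mem_range.mpr ⟨v, funext fun i => ?_⟩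
    show (P.mulVecLin v) i = g i
    simp only [Matrix.mulVecLin_apply, Matrix.mulVec, dotProduct]
    rw [Finset.sum_eq_single i]
    · exact (hv i).symm
    · intro j _ hj
      rw [hP (Ne.symm hj), zero_mul]
    · intro h
      exact absurd (Finset.mem_univ i) h

private lemma finite_quot_matSub' {d : ℕ} {P : Matrix (Fin d) (Fin d) ℤ} (hP : P.IsDiag)
    (hdet : P.det ≠ 0) : Finite ((Fin d → ℤ) ⧸ matSub P) := by
  have hdetprod : P.det = ∏ i, P i i := by
    conv_lhs => rw [← hP.diagonal_diag]
    rw [Matrix.det_diagonal]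
    rfl
  have hne : ∀ i, NeZero (P i i).natAbs := by
    intro i
    rw [hdetprod] at hdet
    refine ⟨Int.natAbs_ne_zero.mpr ?_⟩
    exact Finset.prod_ne_zero_iff.mp hdet i (Finset.mem_univ i)
  haveI := hne
  let ψ : (Fin d → ℤ) →+ ∀ i, ZMod (P i i).natAbs :=
    AddMonoidHom.mk' (fun g i => ((g i : ℤ) : ZMod (P i i).natAbs)) (by
      intro a b
      funext i
      simp [Pi.add_apply])
  have hker : matSub P = ψ.ker := by
    ext g
    rw [mem_matSub_diag' hP, AddMonoidHom.mem_ker]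
    constructor
    · intro h
      funext i
      show ((g i : ℤ) : ZMod (P i i).natAbs) = 0
      rw [ZMod.intCast_zmod_eq_zero_iff_dvd]
      exact (Int.natAbs_dvd.mpr (h i))
    · intro h i
      have : ((g i : ℤ) : ZMod (P i i).natAbs) = 0 := congrFun h i
      rw [ZMod.intCast_zmod_eq_zero_iff_dvd] at this
      exact Int.natAbs_dvd.mp this
  rw [hker]
  exact Finite.of_equiv _ (QuotientAddGroup.quotientKerEquivRange ψ).symm.toEquiv

private lemma diag_dvd_of_le' {d : ℕ} {P : ℕ → Matrix (Fin d) (Fin d) ℤ}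
    (hscale : IsScale P) (hdiag : ∀ n, (P n).IsDiag) {a b : ℕ} (h : a ≤ b) (i : Fin d) :
    P a i i ∣ P b i i := by
  induction b, h using Nat.le_induction with
  | base => exact dvd_refl _
  | succ n hn ih =>
    obtain ⟨Q, hQ⟩ := hscale.2 n
    have hstep : P (n + 1) i i = P n i i * Q i i := by
      rw [hQ, Matrix.mul_apply]
      rw [Finset.sum_eq_single i]
      · intro j _ hj
        rw [hdiag n (Ne.symm hj), zero_mul]
      · intro h
        exact absurd (Finset.mem_univ i) h
    rw [hstep]
    exact ih.mul_right _

private lemma matSub_antitone' {d : ℕ} {P : ℕ → Matrix (Fin d) (Fin d) ℤ}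
    (hscale : IsScale P) {a b : ℕ} (h : a ≤ b) : matSub (P b) ≤ matSub (P a) := by
  induction b, h using Nat.le_induction with
  | base => exact le_refl _
  | succ n hn ih =>
    refine le_trans ?_ ih
    intro x hx
    obtain ⟨Q, hQ⟩ := hscale.2 n
    obtain ⟨v, rfl⟩ := AddMonoidHom.mem_range.mp hx
    refine AddMonoidHom.mem_range.mpr ⟨Q.mulVecLin v, ?_⟩
    show (P n).mulVecLin (Q.mulVecLin v) = (P (n + 1)).mulVecLin v
    rw [hQ, Matrix.mulVecLin_mul]
    rfl

private lemma odoSet_closed' {H : Type*} [AddCommGroup H] [TopologicalSpace H] [DiscreteTopology H]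
    (Γ : ℕ → AddSubgroup H) (hΓ : ∀ n, Γ (n + 1) ≤ Γ n) : IsClosed (OdoSet Γ) := by
  haveI : ∀ n, DiscreteTopology (H ⧸ Γ n) := fun n => quot_discrete' (Γ n)
  have heq : OdoSet Γ = ⋂ n, {f : OdoPi Γ |
      QuotientAddGroup.map (Γ (n + 1)) (Γ n) (AddMonoidHom.id H)
        (fun x hx => hΓ n hx) (f (n + 1)) = f n} := by
    ext f
    simp only [Set.mem_iInter, Set.mem_setOf_eq]
    constructor
    · intro hf n
      obtain ⟨g, hg⟩ := QuotientAddGroup.mk_surjective (f (n + 1))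
      rw [← hg]
      exact (QuotientAddGroup.map_mk _ _ _ _ g).trans (hf n g hg.symm).symm
    · intro hf n g hg
      rw [← hf n, hg]
      exact QuotientAddGroup.map_mk _ _ _ _ g
  rw [heq]
  exact isClosed_iInter fun n => isClosed_eq
    (Continuous.comp continuous_of_discreteTopology (continuous_apply (n + 1)))
    (continuous_apply n)

end Statement19Aux

set_option maxHeartbeats 1600000

/-- **Corollary.** Let `(P_n)` be a scale of diagonal matrices such that for
every `M ≥ 1` and every `i` some `(P_n)_{i,i}` is divisible by `M`. Then the
odometer associated to `Γ_n = P_n ℤ^d` is the universal `ℤ^d`-odometer: every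
`ℤ^d`-odometer is a factor of it. -/
theorem statement19 (d : ℕ) (P : ℕ → Matrix (Fin d) (Fin d) ℤ)
    (hscale : IsScale P) (hdiag : ∀ n, (P n).IsDiag)
    (hdvd : ∀ M : ℕ, 0 < M → ∀ i : Fin d, ∃ n, (M : ℤ) ∣ P n i i) :
    ∀ Γ' : ℕ → AddSubgroup (Fin d → ℤ), (∀ n, Γ' (n + 1) ≤ Γ' n) →
      (∀ n, (Γ' n).FiniteIndex) →
      OdoFactor (fun n => matSub (P n)) Γ' := by
  intro Γ' hdec hfin
  set Γ : ℕ → AddSubgroup (Fin d → ℤ) := fun n => matSub (P n) with hΓdef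
  have hΓdec : ∀ n, Γ (n + 1) ≤ Γ n := fun n => matSub_antitone' hscale (Nat.le_succ n)
  -- for every k there is N with matSub (P N) ≤ Γ' k
  have hex : ∀ k : ℕ, ∃ N : ℕ, Γ N ≤ Γ' k := by
    intro k
    haveI := hfin k
    have hMpos : 0 < (Γ' k).index := Nat.pos_of_ne_zero (hfin k).index_ne_zero
    choose nn hnn using fun i => hdvd (Γ' k).index hMpos i
    refine ⟨Finset.univ.sup nn, ?_⟩
    intro g hg
    have hdvdg : ∀ i, ((Γ' k).index : ℤ) ∣ g i := by
      intro i
      have h1 : P (nn i) i i ∣ P (Finset.univ.sup nn) i i :=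
        diag_dvd_of_le' hscale hdiag (Finset.le_sup (Finset.mem_univ i)) i
      have h2 := (mem_matSub_diag' (hdiag _)).mp hg i
      exact ((hnn i).trans h1).trans h2
    have hrepr : g = (Γ' k).index • fun i => g i / ((Γ' k).index : ℤ) := by
      funext i
      simp only [Pi.smul_apply, nsmul_eq_mul]
      exact (Int.mul_ediv_cancel' (hdvdg i)).symm
    rw [hrepr]
    exact (Γ' k).nsmul_index_mem _
  choose N hN using hex
  -- monotone choice of levels
  let m : ℕ → ℕ := fun k => Nat.rec (N 0) (fun k mk => max mk (N (k + 1))) k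
  have hm_mono : ∀ k, m k ≤ m (k + 1) := fun k => le_max_left _ _
  have hmN : ∀ k, N k ≤ m k := by
    intro k
    cases k with
    | zero => exact le_refl _
    | succ k => exact le_max_right _ _
  have hmle : ∀ k, Γ (m k) ≤ Γ' k := fun k =>
    le_trans (matSub_antitone' hscale (hmN k)) (hN k)
  -- the factor map
  let φ : ∀ k : ℕ, (Fin d → ℤ) ⧸ Γ (m k) →+ (Fin d → ℤ) ⧸ Γ' k := fun k =>
    QuotientAddGroup.map (Γ (m k)) (Γ' k) (AddMonoidHom.id _) (fun x hx => hmle k hx)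
  let r : OdoPi Γ → OdoPi Γ' := fun f k => φ k (f (m k))
  haveI hD : ∀ n : ℕ, DiscreteTopology ((Fin d → ℤ) ⧸ Γ n) := fun n => quot_discrete' _
  haveI hD' : ∀ n : ℕ, DiscreteTopology ((Fin d → ℤ) ⧸ Γ' n) := fun n => quot_discrete' _
  have hrc : Continuous r := continuous_pi fun k =>
    Continuous.comp continuous_of_discreteTopology (continuous_apply (m k))
  have hφmk : ∀ (k : ℕ) (x : Fin d → ℤ),
      φ k (QuotientAddGroup.mk x) = QuotientAddGroup.mk x := fun k x =>
    QuotientAddGroup.map_mk _ _ _ _ x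
  -- r maps OdoSet Γ into OdoSet Γ'
  have hfa : ∀ f ∈ OdoSet Γ, r f ∈ OdoSet Γ' := by
    intro f hf n g hg
    obtain ⟨h, hh⟩ := QuotientAddGroup.mk_surjective (f (m (n + 1)))
    have h1 : r f (n + 1) = QuotientAddGroup.mk h :=
      (congrArg (φ (n + 1)) hh.symm).trans (hφmk (n + 1) h)
    have hgh : -g + h ∈ Γ' (n + 1) := by
      rw [← QuotientAddGroup.eq]
      exact hg.symm.trans h1
    have hfm : f (m n) = QuotientAddGroup.mk h := odo_back' hf (m (n + 1)) (hm_mono n) h hh.symm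
    show φ n (f (m n)) = QuotientAddGroup.mk g
    rw [hfm, hφmk n h, QuotientAddGroup.eq]
    have := (Γ' (n + 1)).neg_mem hgh
    rw [neg_add_rev, neg_neg] at this
    exact hdec n this
  -- surjectivity onto OdoSet Γ'
  have hsurj : ∀ f' ∈ OdoSet Γ', ∃ f ∈ OdoSet Γ, r f = f' := by
    intro f' hf'
    haveI hfinq : ∀ n : ℕ, Finite ((Fin d → ℤ) ⧸ Γ n) := fun n =>
      finite_quot_matSub' (hdiag n) (hscale.1 n)
    haveI : ∀ n : ℕ, CompactSpace ((Fin d → ℤ) ⧸ Γ n) := fun n => Finite.compactSpace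
    haveI : CompactSpace (OdoPi Γ) := Pi.compactSpace
    let C : ℕ → Set (OdoPi Γ) := fun n => OdoSet Γ ∩ {f | ∀ k ≤ n, r f k = f' k}
    have hCanti : ∀ n, C (n + 1) ⊆ C n := fun n f hf =>
      ⟨hf.1, fun k hk => hf.2 k (hk.trans (Nat.le_succ n))⟩
    have hCne : ∀ n, (C n).Nonempty := by
      intro n
      obtain ⟨x, hx⟩ := QuotientAddGroup.mk_surjective (f' n)
      refine ⟨fun k => QuotientAddGroup.mk x, const_mem_odoSet' hΓdec x, ?_⟩
      intro k hk
      have hfk : f' k = QuotientAddGroup.mk x := odo_back' hf' n hk x hx.symm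
      show φ k (QuotientAddGroup.mk x) = f' k
      rw [hφmk k x, hfk]
    have hCclosed : ∀ n, IsClosed (C n) := by
      intro n
      refine (odoSet_closed' Γ hΓdec).inter ?_
      have heq : {f : OdoPi Γ | ∀ k ≤ n, r f k = f' k} =
          ⋂ k ∈ Set.Iic n, {f : OdoPi Γ | r f k = f' k} := by
        ext f
        simp [Set.mem_iInter]
      rw [heq]
      refine isClosed_biInter fun k _ => isClosed_eq ?_ continuous_const
      exact Continuous.comp continuous_of_discreteTopology (continuous_apply (m k))
    obtain ⟨f, hfmem⟩ := IsCompact.nonempty_iInter_of_sequence_nonempty_isCompact_isClosed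
      C hCanti hCne ((hCclosed 0).isCompact) hCclosed
    refine ⟨f, (Set.mem_iInter.mp hfmem 0).1, funext fun k => ?_⟩
    exact (Set.mem_iInter.mp hfmem k).2 k le_rfl
  refine ⟨r, hrc.continuousOn, ?_, ?_⟩
  · apply Set.eq_of_subset_of_subset
    · rintro _ ⟨f, hf, rfl⟩
      exact hfa f hf
    · intro f' hf'
      obtain ⟨f, hf, hrf⟩ := hsurj f' hf'
      exact ⟨f, hf, hrf⟩
  · intro f hf g
    funext k
    show φ k (QuotientAddGroup.mk g + f (m k)) = QuotientAddGroup.mk g + φ k (f (m k))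
    rw [map_add, hφmk k g]


end ToeplitzPaper
end
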